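/- arXiv:math/0111277 — 7 statements merged into one kernel-verified Lean document; each statement's English description precedes it below -/
import Mathlib

section
/- Let R be a commutative ring and f : N → M an R-linear map between projective R-modules. Then f is Fredholm if and only if there exist finitely generated projective R-modules Q and P together with an R-linear isomorphism ẽ : N ⊕ Q → M ⊕ P such that f equals the composition of the canonical inclusion N → N ⊕ Q, the isomorphism ẽ, and the canonical projection M ⊕ P → M. -/
universe u

/-- A linear map has finite-type image if its image is contained in a finitely
generated submodule. -/
def HasFiniteTypeImage {R A B : Type*} [CommRing R] [AddCommGroup A] [Module R A]
    [AddCommGroup B] [Module R B] (h : A →ₗ[R] B) : Prop :=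
  ∃ S : Submodule R B, S.FG ∧ LinearMap.range h ≤ S

/-- A linear map `f : N → M` is Fredholm if it is invertible modulo maps with
finite-type image. -/
def IsFredholm {R N M : Type*} [CommRing R] [AddCommGroup N] [Module R N]
    [AddCommGroup M] [Module R M] (f : N →ₗ[R] M) : Prop :=
  ∃ g : M →ₗ[R] N, HasFiniteTypeImage (f ∘ₗ g - LinearMap.id) ∧
    HasFiniteTypeImage (g ∘ₗ f - LinearMap.id)

lemma aux_range_le {R N M Q P : Type u} [CommRing R] [AddCommGroup N] [Module R N]
    [AddCommGroup M] [Module R M] [AddCommGroup Q] [Module R Q]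
    [AddCommGroup P] [Module R P] (e : (N × Q) ≃ₗ[R] (M × P)) :
    LinearMap.range
      ((LinearMap.fst R M P ∘ₗ (e : (N × Q) →ₗ[R] (M × P)) ∘ₗ LinearMap.inl R N Q) ∘ₗ
        (LinearMap.fst R N Q ∘ₗ (e.symm : (M × P) →ₗ[R] (N × Q)) ∘ₗ LinearMap.inl R M P)
        - LinearMap.id) ≤
      Submodule.map (LinearMap.fst R M P ∘ₗ (e : (N × Q) →ₗ[R] (M × P)) ∘ₗ
        LinearMap.inr R N Q) ⊤ := by
  rintro x ⟨m, rfl⟩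
  set v := e.symm (m, 0) with hv
  refine ⟨-v.2, trivial, ?_⟩
  have h1 : e (v.1, 0) + e (0, v.2) = (m, 0) := by
    rw [← map_add, show (v.1, (0 : Q)) + ((0 : N), v.2) = v from by ext <;> simp, hv,
      e.apply_symm_apply]
  have h3 : e (v.1, 0) = (m, 0) - e (0, v.2) := by rw [eq_sub_iff_add_eq, h1]
  have h2 : e ((0 : N), -v.2) = -(e (0, v.2)) := by
    rw [← map_neg]; congr 1; ext <;> simp
  simp only [LinearMap.comp_apply, LinearMap.sub_apply, LinearMap.id_apply,
    LinearMap.inr_apply, LinearMap.inl_apply, LinearMap.fst_apply, LinearEquiv.coe_coe]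
  rw [h2, show (e.symm (m, 0)).1 = v.1 from rfl, h3]
  simp

/-- A linear map between projective modules is Fredholm iff it can be written as the
composition of the inclusion `N → N ⊕ Q`, an isomorphism `N ⊕ Q ≅ M ⊕ P`, and the
projection `M ⊕ P → M`, where `P`, `Q` are finitely generated projective modules. -/
theorem isFredholm_iff_exists_stabilized_iso
    {R : Type u} [CommRing R] {N M : Type u} [AddCommGroup N] [Module R N]
    [AddCommGroup M] [Module R M] [Module.Projective R N] [Module.Projective R M]
    (f : N →ₗ[R] M) :
    IsFredholm f ↔
      ∃ Q P : ModuleCat.{u} R,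
        Module.Finite R Q ∧ Module.Projective R Q ∧
        Module.Finite R P ∧ Module.Projective R P ∧
        ∃ e : (N × Q) ≃ₗ[R] (M × P),
          f = (LinearMap.fst R M P) ∘ₗ (e : (N × Q) →ₗ[R] (M × P)) ∘ₗ
            (LinearMap.inl R N Q) := by
  constructor
  · rintro ⟨g, ⟨S, hSfg, hS⟩, ⟨T, hTfg, hT⟩⟩
    classical
    obtain ⟨s, hs⟩ := hSfg
    set Qt : Type u := (↑s : Set M) → R with hQtdef
    let v : (↑s : Set M) → M := Subtype.val
    let j : Qt →ₗ[R] M := Fintype.linearCombination R v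
    have hjrange : LinearMap.range j = S := by
      rw [show j = Fintype.linearCombination R v from rfl,
        Fintype.range_linearCombination, Subtype.range_val]
      exact hs
    -- the defect `d = id - f ∘ g` takes values in `S`
    let d : M →ₗ[R] M := LinearMap.id - f ∘ₗ g
    have hd : ∀ x, d x ∈ S := by
      intro x
      have h0 : f (g x) - x ∈ S := by
        simpa using hS (LinearMap.mem_range_self (f ∘ₗ g - LinearMap.id) x)
      have : d x = -(f (g x) - x) := by simp [d]
      rw [this]; exact S.neg_mem h0
    -- lift `d` through `j` using projectivity of `M`
    have hjmem : ∀ x, j x ∈ S := fun x => hjrange ▸ LinearMap.mem_range_self j x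
    obtain ⟨u, hu⟩ := Module.projective_lifting_property (j.codRestrict S hjmem)
      (d.codRestrict S hd)
      (fun y => by
        obtain ⟨x, hx⟩ : (y : M) ∈ LinearMap.range j := by rw [hjrange]; exact y.2
        exact ⟨x, Subtype.ext hx⟩)
    have huj : ∀ x, j (u x) = x - f (g x) := by
      intro x
      have := congrArg Subtype.val (LinearMap.congr_fun hu x)
      simpa [d] using this
    let φ : (N × Qt) →ₗ[R] M := f.coprod j
    let ψ : M →ₗ[R] (N × Qt) := g.prod u
    have hφψ : ∀ m, φ (ψ m) = m := by
      intro m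
      show f (g m) + j (u m) = m
      rw [huj]; abel
    let π : (N × Qt) →ₗ[R] (N × Qt) := LinearMap.id - ψ ∘ₗ φ
    have hπker : ∀ x, π x ∈ LinearMap.ker φ := by
      intro x
      show φ (x - ψ (φ x)) = 0
      rw [map_sub, hφψ, sub_self]
    have hfix : ∀ x ∈ LinearMap.ker φ, π x = x := by
      intro x hx
      show x - ψ (φ x) = x
      rw [LinearMap.mem_ker.mp hx, map_zero, sub_zero]
    set K := LinearMap.ker φ with hKdef
    -- K is finitely generated
    have htop : (⊤ : Submodule R Qt).FG := Module.Finite.fg_top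
    let W₁ : Submodule R N := T ⊔ Submodule.map (g ∘ₗ j) ⊤
    have hW₁ : W₁.FG := hTfg.sup (htop.map _)
    let W := W₁.prod (⊤ : Submodule R Qt)
    have hW : W.FG := hW₁.prod htop
    have hπW : ∀ x, π x ∈ W := by
      rintro ⟨n, q⟩
      refine Submodule.mem_prod.mpr ⟨?_, trivial⟩
      have hTn : g (f n) - n ∈ T := by
        simpa using hT (LinearMap.mem_range_self (g ∘ₗ f - LinearMap.id) n)
      have h1 : (π (n, q)).1 = -(g (f n) - n) + -(g (j q)) := by
        show n - g (f n + j q) = _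
        rw [map_add]; abel
      rw [h1]
      exact W₁.add_mem (Submodule.mem_sup_left (T.neg_mem hTn))
        (Submodule.mem_sup_right (Submodule.neg_mem _ ⟨q, trivial, rfl⟩))
    have hKW : ∀ x ∈ K, x ∈ W := fun x hx => by rw [← hfix x hx]; exact hπW x
    have hKmap : K = Submodule.map π W := by
      apply le_antisymm
      · intro x hx; exact ⟨x, hKW x hx, hfix x hx⟩
      · rintro _ ⟨y, -, rfl⟩; exact hπker y
    have hKfg : K.FG := hKmap ▸ hW.map π
    have hKfin : Module.Finite R K := Module.Finite.iff_fg.mpr hKfg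
    -- K is projective: it is a direct summand of N × Qt
    let π' : (N × Qt) →ₗ[R] K := π.codRestrict K hπker
    have hsplit : π' ∘ₗ K.subtype = LinearMap.id := by
      apply LinearMap.ext; intro x
      exact Subtype.ext (hfix x.1 x.2)
    have hKproj : Module.Projective R K := Module.Projective.of_split K.subtype π' hsplit
    -- the stabilized isomorphism
    let Φ : (N × Qt) →ₗ[R] (M × K) := φ.prod π'
    let Ψ : (M × K) →ₗ[R] (N × Qt) := ψ.coprod K.subtype
    have h1 : Φ ∘ₗ Ψ = LinearMap.id := by
      apply LinearMap.ext; rintro ⟨m, k⟩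
      have hk : φ (k : N × Qt) = 0 := k.2
      have hval : π (ψ m + (k : N × Qt)) = (k : N × Qt) := by
        show ψ m + (k : N × Qt) - ψ (φ (ψ m + (k : N × Qt))) = (k : N × Qt)
        rw [map_add, hφψ, hk, add_zero]; abel
      refine Prod.ext ?_ (Subtype.ext ?_)
      · show φ (ψ m + (k : N × Qt)) = m
        rw [map_add, hφψ, hk, add_zero]
      · exact hval
    have h2 : Ψ ∘ₗ Φ = LinearMap.id := by
      apply LinearMap.ext; intro x
      show ψ (φ x) + π x = x
      show ψ (φ x) + (x - ψ (φ x)) = x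
      abel
    let e : (N × Qt) ≃ₗ[R] (M × K) := LinearEquiv.ofLinear Φ Ψ h1 h2
    refine ⟨ModuleCat.of R Qt, ModuleCat.of R K,
      inferInstanceAs (Module.Finite R Qt), inferInstanceAs (Module.Projective R Qt),
      hKfin, hKproj, e, ?_⟩
    apply LinearMap.ext; intro n
    show f n = (Φ (n, 0)).1
    show f n = f n + j 0
    rw [map_zero, add_zero]
  · rintro ⟨Q, P, hQfin, hQproj, hPfin, hPproj, e, hfe⟩
    refine ⟨LinearMap.fst R N Q ∘ₗ (e.symm : (M × P) →ₗ[R] (N × Q)) ∘ₗ LinearMap.inl R M P,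
      ⟨Submodule.map (LinearMap.fst R M P ∘ₗ (e : (N × Q) →ₗ[R] (M × P)) ∘ₗ
        LinearMap.inr R N Q) ⊤, hQfin.fg_top.map _, ?_⟩,
      ⟨Submodule.map (LinearMap.fst R N Q ∘ₗ (e.symm : (M × P) →ₗ[R] (N × Q)) ∘ₗ
        LinearMap.inr R M P) ⊤, hPfin.fg_top.map _, ?_⟩⟩
    · rw [hfe]; exact aux_range_le e
    · have h := aux_range_le e.symm
      rw [e.symm_symm] at h
      rw [hfe]
      exact h
end

section
/- Let R be a commutative ring, I ⊆ R a nilpotent ideal, and f : N → M an R-linear map between projective R-modules. Then f is Fredholm over R if and only if the induced R/I-linear map N/IN → M/IM is Fredholm over R/I. -/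
open TensorProduct

section Aux

variable {R A B C : Type*} [CommRing R] [AddCommGroup A] [Module R A]
  [AddCommGroup B] [Module R B] [AddCommGroup C] [Module R C]

lemma HasFiniteTypeImage.comp_left {h : A →ₗ[R] B} (φ : B →ₗ[R] C)
    (hh : HasFiniteTypeImage h) : HasFiniteTypeImage (φ ∘ₗ h) := by
  obtain ⟨S, hS, hle⟩ := hh
  refine ⟨S.map φ, hS.map φ, ?_⟩
  rintro x ⟨a, rfl⟩
  exact ⟨h a, hle ⟨a, rfl⟩, rfl⟩

lemma HasFiniteTypeImage.comp_right {h : B →ₗ[R] C} (φ : A →ₗ[R] B)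
    (hh : HasFiniteTypeImage h) : HasFiniteTypeImage (h ∘ₗ φ) := by
  obtain ⟨S, hS, hle⟩ := hh
  exact ⟨S, hS, by rintro x ⟨a, rfl⟩; exact hle ⟨φ a, rfl⟩⟩

lemma HasFiniteTypeImage.add {h₁ h₂ : A →ₗ[R] B} (H1 : HasFiniteTypeImage h₁)
    (H2 : HasFiniteTypeImage h₂) : HasFiniteTypeImage (h₁ + h₂) := by
  obtain ⟨S₁, hS₁, hle₁⟩ := H1
  obtain ⟨S₂, hS₂, hle₂⟩ := H2
  refine ⟨S₁ ⊔ S₂, hS₁.sup hS₂, ?_⟩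
  rintro x ⟨a, rfl⟩
  exact Submodule.add_mem _ (Submodule.mem_sup_left (hle₁ ⟨a, rfl⟩))
    (Submodule.mem_sup_right (hle₂ ⟨a, rfl⟩))

lemma HasFiniteTypeImage.sub {h₁ h₂ : A →ₗ[R] B} (H1 : HasFiniteTypeImage h₁)
    (H2 : HasFiniteTypeImage h₂) : HasFiniteTypeImage (h₁ - h₂) := by
  obtain ⟨S₁, hS₁, hle₁⟩ := H1
  obtain ⟨S₂, hS₂, hle₂⟩ := H2
  refine ⟨S₁ ⊔ S₂, hS₁.sup hS₂, ?_⟩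
  rintro x ⟨a, rfl⟩
  exact Submodule.sub_mem _ (Submodule.mem_sup_left (hle₁ ⟨a, rfl⟩))
    (Submodule.mem_sup_right (hle₂ ⟨a, rfl⟩))

lemma HasFiniteTypeImage.baseChange (A' : Type*) [CommRing A'] [Algebra R A']
    {h : B →ₗ[R] C} (hh : HasFiniteTypeImage h) :
    HasFiniteTypeImage (h.baseChange A') := by
  obtain ⟨S, ⟨s, hs⟩, hle⟩ := hh
  refine ⟨Submodule.span A' ((fun c => (1 : A') ⊗ₜ[R] c) '' ↑s),
    Submodule.fg_span ((s.finite_toSet).image _), ?_⟩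
  have key : ∀ c ∈ S, (1 : A') ⊗ₜ[R] c ∈
      Submodule.span A' ((fun c => (1 : A') ⊗ₜ[R] c) '' ↑s) := by
    intro c hc
    have h1 : (TensorProduct.mk R A' C 1) c ∈
        Submodule.map (TensorProduct.mk R A' C 1) S :=
      Submodule.mem_map_of_mem hc
    rw [← hs, Submodule.map_span] at h1
    have h2 := Submodule.span_le_restrictScalars R A'
      ((TensorProduct.mk R A' C 1) '' ↑s) h1
    exact h2
  rintro x ⟨y, rfl⟩
  induction y using TensorProduct.induction_on with
  | zero => simp
  | tmul a b =>
      rw [LinearMap.baseChange_tmul]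
      have e1 : a ⊗ₜ[R] h b = a • ((1 : A') ⊗ₜ[R] h b) := by
        rw [TensorProduct.smul_tmul', smul_eq_mul, mul_one]
      rw [e1]
      exact Submodule.smul_mem _ _ (key _ (hle ⟨b, rfl⟩))
  | add x y hx hy => rw [map_add]; exact Submodule.add_mem _ hx hy

/-- Splitting a map whose range lies in a sum of two submodules, using projectivity
of the domain. -/
lemma split_of_range_le_sup {P : Type*} [AddCommGroup P] [Module R P]
    [Module.Projective R P] (u : P →ₗ[R] B) (S T : Submodule R B)
    (h : LinearMap.range u ≤ S ⊔ T) :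
    ∃ s t : P →ₗ[R] B, u = s + t ∧ LinearMap.range s ≤ S ∧ LinearMap.range t ≤ T := by
  set σ : (↥S × ↥T) →ₗ[R] B := S.subtype.coprod T.subtype with hσ
  have hrange : LinearMap.range σ = S ⊔ T := by
    rw [hσ, LinearMap.range_coprod, Submodule.range_subtype, Submodule.range_subtype]
  have hu : ∀ p, u p ∈ LinearMap.range σ := fun p => hrange ▸ h ⟨p, rfl⟩
  obtain ⟨v, hv⟩ := Module.projective_lifting_property σ.rangeRestrict
    (LinearMap.codRestrict (LinearMap.range σ) u hu) σ.surjective_rangeRestrict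
  have key : ∀ p, ((v p).1 : B) + ((v p).2 : B) = u p := by
    intro p
    have h1 := LinearMap.congr_fun hv p
    have h2 := congrArg Subtype.val h1
    simpa [σ, LinearMap.rangeRestrict, LinearMap.coprod_apply] using h2
  refine ⟨S.subtype ∘ₗ (LinearMap.fst R ↥S ↥T) ∘ₗ v,
    T.subtype ∘ₗ (LinearMap.snd R ↥S ↥T) ∘ₗ v, ?_, ?_, ?_⟩
  · ext p
    simp only [LinearMap.add_apply, LinearMap.comp_apply, Submodule.coe_subtype,
      LinearMap.fst_apply, LinearMap.snd_apply]
    exact (key p).symm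
  · rintro x ⟨p, rfl⟩
    simp only [LinearMap.comp_apply, Submodule.coe_subtype]
    exact ((v p).1).2
  · rintro x ⟨p, rfl⟩
    simp only [LinearMap.comp_apply, Submodule.coe_subtype]
    exact ((v p).2).2

lemma isNilpotent_of_range_le_smul {I : Ideal R} (hI : IsNilpotent I)
    (t : B →ₗ[R] B) (ht : LinearMap.range t ≤ I • ⊤) : IsNilpotent t := by
  obtain ⟨n, hn⟩ := hI
  have key : ∀ k : ℕ, LinearMap.range (t ^ (k + 1)) ≤ I ^ (k + 1) • ⊤ := by
    intro k
    induction k with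
    | zero => simpa using ht
    | succ k ih =>
        have h1 : t ^ (k + 2) = t ∘ₗ t ^ (k + 1) := by
          rw [pow_succ']; rfl
        rw [h1, LinearMap.range_comp]
        calc Submodule.map t (LinearMap.range (t ^ (k + 1)))
            ≤ Submodule.map t (I ^ (k + 1) • ⊤) := Submodule.map_mono ih
          _ = I ^ (k + 1) • Submodule.map t ⊤ := Submodule.map_smul'' _ _ _
          _ ≤ I ^ (k + 1) • (I • ⊤) := smul_mono_right _
              (by rw [Submodule.map_top]; exact ht)
          _ = (I ^ (k + 1) • I) • ⊤ := (Submodule.smul_assoc _ _ _).symm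
          _ = I ^ (k + 2) • ⊤ := by rw [smul_eq_mul, ← pow_succ]
  refine ⟨n + 1, ?_⟩
  have h2 := key n
  have h3 : I ^ (n + 1) • (⊤ : Submodule R B) ≤ ⊥ := by
    have h4 : I ^ (n + 1) ≤ I ^ n := Ideal.pow_le_pow_right (Nat.le_succ n)
    have h5 : I ^ (n + 1) ≤ (⊥ : Ideal R) := by
      rw [← Ideal.zero_eq_bot, ← hn]; exact h4
    calc I ^ (n + 1) • (⊤ : Submodule R B) ≤ (⊥ : Ideal R) • ⊤ :=
          Submodule.smul_mono h5 le_rfl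
      _ = ⊥ := Submodule.bot_smul _
  rw [← LinearMap.range_eq_bot]
  exact le_bot_iff.mp (h2.trans h3)

/-- Pull back a finite-type bound along the projection to the quotient base change. -/
lemma exists_fg_sup_of_quot (I : Ideal R) {D : Type*}
    [AddCommGroup D] [Module R D] [Module (R ⧸ I) D] [IsScalarTower R (R ⧸ I) D]
    (π : C →ₗ[R] D) (hπ : Function.Surjective π)
    (hker : LinearMap.ker π = I • ⊤)
    (u : B →ₗ[R] C) (Sbar : Submodule (R ⧸ I) D) (hfgbar : Sbar.FG)
    (hmem : ∀ b, π (u b) ∈ Sbar) :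
    ∃ S : Submodule R C, S.FG ∧ LinearMap.range u ≤ S ⊔ I • ⊤ := by
  obtain ⟨sb, hsb⟩ := hfgbar
  set c : D → C := Function.surjInv hπ with hc
  refine ⟨Submodule.span R (c '' ↑sb),
    Submodule.fg_span ((sb.finite_toSet).image c), ?_⟩
  rintro x ⟨b, rfl⟩
  have h1 : π (u b) ∈ Submodule.span R (↑sb : Set D) := by
    have h2 : π (u b) ∈ Submodule.restrictScalars R Sbar := hmem b
    rwa [← hsb, Submodule.restrictScalars_span R (R ⧸ I)
      Ideal.Quotient.mk_surjective] at h2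
  have h3 : π '' (c '' ↑sb) = (↑sb : Set D) := by
    rw [Set.image_image]
    have e1 : (fun x => π (c x)) = fun x => x :=
      funext fun x => Function.surjInv_eq hπ x
    rw [e1, Set.image_id']
  rw [← h3, ← Submodule.map_span] at h1
  obtain ⟨s, hsS, hs⟩ := h1
  have h4 : u b - s ∈ (I • ⊤ : Submodule R C) := by
    rw [← hker, LinearMap.mem_ker, map_sub, hs, sub_self]
  have h5 := Submodule.add_mem (Submodule.span R (c '' ↑sb) ⊔ I • ⊤)
    (Submodule.mem_sup_left hsS) (Submodule.mem_sup_right h4)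
  simpa using h5

end Aux

/-- For a nilpotent ideal `I ⊆ R`, a linear map between projective `R`-modules is
Fredholm over `R` iff its reduction modulo `I` is Fredholm over `R/I`. -/
theorem isFredholm_iff_isFredholm_of_nilpotent
    {R : Type*} [CommRing R] (I : Ideal R) (hI : IsNilpotent I)
    {N M : Type*} [AddCommGroup N] [Module R N] [AddCommGroup M] [Module R M]
    [Module.Projective R N] [Module.Projective R M] (f : N →ₗ[R] M) :
    IsFredholm f ↔ IsFredholm (f.baseChange (R ⧸ I)) := by
  constructor
  · rintro ⟨g, h1, h2⟩
    refine ⟨g.baseChange (R ⧸ I), ?_, ?_⟩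
    · have e1 : f.baseChange (R ⧸ I) ∘ₗ g.baseChange (R ⧸ I) - LinearMap.id
          = (f ∘ₗ g - LinearMap.id).baseChange (R ⧸ I) := by
        rw [LinearMap.baseChange_sub, LinearMap.baseChange_comp, LinearMap.baseChange_id]
      rw [e1]
      exact h1.baseChange _
    · have e2 : g.baseChange (R ⧸ I) ∘ₗ f.baseChange (R ⧸ I) - LinearMap.id
          = (g ∘ₗ f - LinearMap.id).baseChange (R ⧸ I) := by
        rw [LinearMap.baseChange_sub, LinearMap.baseChange_comp, LinearMap.baseChange_id]
      rw [e2]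
      exact h2.baseChange _
  · rintro ⟨gb, hfgb, hgfb⟩
    have hsur : Function.Surjective (algebraMap R (R ⧸ I)) := Ideal.Quotient.mk_surjective
    set πM : M →ₗ[R] (R ⧸ I) ⊗[R] M := TensorProduct.mk R (R ⧸ I) M 1 with hπM
    set πN : N →ₗ[R] (R ⧸ I) ⊗[R] N := TensorProduct.mk R (R ⧸ I) N 1 with hπN
    have hπMs : Function.Surjective πM := TensorProduct.mk_surjective R M (R ⧸ I) hsur
    have hπNs : Function.Surjective πN := TensorProduct.mk_surjective R N (R ⧸ I) hsur
    have kerM : LinearMap.ker πM = (I • ⊤ : Submodule R M) := by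
      ext x
      have h1 := LinearMap.congr_fun (TensorProduct.quotTensorEquivQuotSMul_comp_mk (M := M) I) x
      simp only [LinearMap.comp_apply, LinearEquiv.coe_coe, Submodule.mkQ_apply] at h1
      rw [LinearMap.mem_ker]
      constructor
      · intro hx
        rw [← Submodule.Quotient.mk_eq_zero, ← h1]
        show (TensorProduct.quotTensorEquivQuotSMul M I) (πM x) = 0
        rw [hx, map_zero]
      · intro hx
        have h2 : (TensorProduct.quotTensorEquivQuotSMul M I) (πM x) = 0 := by
          rw [h1]
          exact (Submodule.Quotient.mk_eq_zero _).mpr hx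
        exact ((TensorProduct.quotTensorEquivQuotSMul M I).map_eq_zero_iff).mp h2
    have kerN : LinearMap.ker πN = (I • ⊤ : Submodule R N) := by
      ext x
      have h1 := LinearMap.congr_fun (TensorProduct.quotTensorEquivQuotSMul_comp_mk (M := N) I) x
      simp only [LinearMap.comp_apply, LinearEquiv.coe_coe, Submodule.mkQ_apply] at h1
      rw [LinearMap.mem_ker]
      constructor
      · intro hx
        rw [← Submodule.Quotient.mk_eq_zero, ← h1]
        show (TensorProduct.quotTensorEquivQuotSMul N I) (πN x) = 0
        rw [hx, map_zero]
      · intro hx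
        have h2 : (TensorProduct.quotTensorEquivQuotSMul N I) (πN x) = 0 := by
          rw [h1]
          exact (Submodule.Quotient.mk_eq_zero _).mpr hx
        exact ((TensorProduct.quotTensorEquivQuotSMul N I).map_eq_zero_iff).mp h2
    obtain ⟨g, hg⟩ := Module.projective_lifting_property πN
      ((gb.restrictScalars R) ∘ₗ πM) hπNs
    have hg' : ∀ m : M, πN (g m) = gb (πM m) := fun m => LinearMap.congr_fun hg m
    have hcommf : ∀ n : N, πM (f n) = f.baseChange (R ⧸ I) (πN n) := by
      intro n
      show (1 : R ⧸ I) ⊗ₜ[R] (f n) = f.baseChange (R ⧸ I) ((1 : R ⧸ I) ⊗ₜ[R] n)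
      rw [LinearMap.baseChange_tmul]
    obtain ⟨Sb1, hSb1fg, hle1⟩ := hfgb
    obtain ⟨Sb2, hSb2fg, hle2⟩ := hgfb
    have hmem₁ : ∀ m : M, πM ((f ∘ₗ g - LinearMap.id : M →ₗ[R] M) m) ∈ Sb1 := by
      intro m
      have e1 : πM ((f ∘ₗ g - LinearMap.id : M →ₗ[R] M) m)
          = (f.baseChange (R ⧸ I) ∘ₗ gb - LinearMap.id :
              (R ⧸ I) ⊗[R] M →ₗ[R ⧸ I] (R ⧸ I) ⊗[R] M) (πM m) := by
        simp only [LinearMap.sub_apply, LinearMap.comp_apply, LinearMap.id_coe, id_eq, map_sub]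
        rw [hcommf, hg']
      rw [e1]
      exact hle1 ⟨πM m, rfl⟩
    have hmem₂ : ∀ n : N, πN ((g ∘ₗ f - LinearMap.id : N →ₗ[R] N) n) ∈ Sb2 := by
      intro n
      have e1 : πN ((g ∘ₗ f - LinearMap.id : N →ₗ[R] N) n)
          = (gb ∘ₗ f.baseChange (R ⧸ I) - LinearMap.id :
              (R ⧸ I) ⊗[R] N →ₗ[R ⧸ I] (R ⧸ I) ⊗[R] N) (πN n) := by
        simp only [LinearMap.sub_apply, LinearMap.comp_apply, LinearMap.id_coe, id_eq, map_sub]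
        rw [hg', hcommf]
      rw [e1]
      exact hle2 ⟨πN n, rfl⟩
    obtain ⟨S₁, hS₁fg, hS₁le⟩ := exists_fg_sup_of_quot I πM hπMs kerM
      (f ∘ₗ g - LinearMap.id) Sb1 hSb1fg hmem₁
    obtain ⟨S₂, hS₂fg, hS₂le⟩ := exists_fg_sup_of_quot I πN hπNs kerN
      (g ∘ₗ f - LinearMap.id) Sb2 hSb2fg hmem₂
    obtain ⟨s₁, t₁, hst₁, hs₁, ht₁⟩ := split_of_range_le_sup
      (f ∘ₗ g - LinearMap.id) S₁ (I • ⊤) hS₁le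
    obtain ⟨s₂, t₂, hst₂, hs₂, ht₂⟩ := split_of_range_le_sup
      (g ∘ₗ f - LinearMap.id) S₂ (I • ⊤) hS₂le
    -- invert 1 + t₁ and 1 + t₂
    have hu₁ : IsUnit ((1 : Module.End R M) + t₁) := by
      simpa [add_comm] using (isNilpotent_of_range_le_smul hI t₁ ht₁).isUnit_add_one
    have hu₂ : IsUnit ((1 : Module.End R N) + t₂) := by
      simpa [add_comm] using (isNilpotent_of_range_le_smul hI t₂ ht₂).isUnit_add_one
    obtain ⟨u₁, hu₁e⟩ := hu₁
    obtain ⟨u₂, hu₂e⟩ := hu₂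
    set w₁ : M →ₗ[R] M := (↑u₁⁻¹ : Module.End R M) with hw₁
    set w₂ : N →ₗ[R] N := (↑u₂⁻¹ : Module.End R N) with hw₂
    have W1 : ∀ x : M, w₁ x + t₁ (w₁ x) = x := by
      intro x
      have hW : ((1 : Module.End R M) + t₁) * w₁ = 1 := by
        rw [← hu₁e]; exact u₁.mul_inv
      have h := DFunLike.congr_fun hW x
      simpa [Module.End.mul_apply, LinearMap.add_apply, Module.End.one_apply] using h
    have W2 : ∀ y : N, w₂ y + w₂ (t₂ y) = y := by
      intro y
      have hW : w₂ * ((1 : Module.End R N) + t₂) = 1 := by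
        rw [← hu₂e]; exact u₂.inv_mul
      have h := DFunLike.congr_fun hW y
      simpa [Module.End.mul_apply, LinearMap.add_apply, Module.End.one_apply, map_add] using h
    have F1 : ∀ x : M, f (g x) - x = s₁ x + t₁ x := by
      intro x
      have h := DFunLike.congr_fun hst₁ x
      simpa [LinearMap.sub_apply, LinearMap.comp_apply, LinearMap.add_apply] using h
    have F2 : ∀ y : N, g (f y) - y = s₂ y + t₂ y := by
      intro y
      have h := DFunLike.congr_fun hst₂ y
      simpa [LinearMap.sub_apply, LinearMap.comp_apply, LinearMap.add_apply] using h
    have ha' : ∀ x : M, f (g (w₁ x)) = x + s₁ (w₁ x) := by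
      intro x
      have h3 := eq_add_of_sub_eq (F1 (w₁ x))
      rw [h3]
      have h4 : s₁ (w₁ x) + t₁ (w₁ x) + w₁ x = (w₁ x + t₁ (w₁ x)) + s₁ (w₁ x) := by abel
      rw [h4, W1 x]
    have hb' : ∀ y : N, w₂ (g (f y)) = y + w₂ (s₂ y) := by
      intro y
      have h1 := eq_add_of_sub_eq (F2 y)
      rw [h1, map_add, map_add]
      have h4 : w₂ (s₂ y) + w₂ (t₂ y) + w₂ y = (w₂ y + w₂ (t₂ y)) + w₂ (s₂ y) := by abel
      rw [h4, W2 y]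
    have hstar : ∀ x : M, w₂ (g x) + w₂ (g (s₁ (w₁ x)))
        = g (w₁ x) + w₂ (s₂ (g (w₁ x))) := by
      intro x
      have h1 : w₂ (g x) + w₂ (g (s₁ (w₁ x))) = w₂ (g (f (g (w₁ x)))) := by
        rw [ha' x, map_add, map_add]
      exact h1.trans (hb' (g (w₁ x)))
    have EqA : f ∘ₗ (g ∘ₗ w₁) - LinearMap.id = s₁ ∘ₗ w₁ := by
      ext x
      simp only [LinearMap.sub_apply, LinearMap.comp_apply, LinearMap.id_coe, id_eq]
      rw [ha' x]
      abel
    have EqB : (g ∘ₗ w₁) ∘ₗ f - LinearMap.id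
        = (((w₂ ∘ₗ g) ∘ₗ (s₁ ∘ₗ w₁)) - ((w₂ ∘ₗ s₂) ∘ₗ (g ∘ₗ w₁))) ∘ₗ f + (w₂ ∘ₗ s₂) := by
      ext n
      simp only [LinearMap.sub_apply, LinearMap.add_apply, LinearMap.comp_apply,
        LinearMap.id_coe, id_eq]
      have P := hstar (f n)
      have Q := hb' n
      generalize hG1 : w₂ (g (s₁ (w₁ (f n)))) = G1 at P ⊢
      generalize hG2 : w₂ (s₂ (g (w₁ (f n)))) = G2 at P ⊢
      generalize hG3 : g (w₁ (f n)) = G3 at P ⊢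
      generalize hG4 : w₂ (g (f n)) = G4 at P Q
      generalize hG5 : w₂ (s₂ n) = G5 at Q ⊢
      rw [Q] at P
      have h6 := eq_sub_of_add_eq P.symm
      rw [h6]
      abel
    have hftA : HasFiniteTypeImage (s₁ ∘ₗ w₁) :=
      HasFiniteTypeImage.comp_right w₁ ⟨S₁, hS₁fg, hs₁⟩
    have hftB : HasFiniteTypeImage (w₂ ∘ₗ s₂) :=
      HasFiniteTypeImage.comp_left w₂ ⟨S₂, hS₂fg, hs₂⟩
    refine ⟨g ∘ₗ w₁, ?_, ?_⟩
    · rw [EqA]; exact hftA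
    · rw [EqB]
      exact (((hftA.comp_left (w₂ ∘ₗ g)).sub (hftB.comp_right (g ∘ₗ w₁))).comp_right f).add hftB
end

section
/- Let R be a Noetherian commutative ring and f : N → M an R-linear map between projective R-modules such that the cokernel of f is a finitely generated R-module and such that, for every prime ideal 𝔭 of R, the induced map N ⊗_R κ(𝔭) → M ⊗_R κ(𝔭) over the residue field κ(𝔭) has finite-dimensional kernel and cokernel. Then f is Fredholm (no local constancy of the index need be assumed). -/
set_option maxHeartbeats 1000000
set_option synthInstance.maxHeartbeats 400000

open TensorProduct

/-- The residue field of a commutative ring at a prime ideal. -/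
abbrev ResidueFieldAt {R : Type*} [CommRing R] (q : PrimeSpectrum R) : Type _ :=
  IsLocalRing.ResidueField (Localization.AtPrime q.asIdeal)

section Aux

variable {R : Type*} [CommRing R]

lemma algebraMap_residueFieldAt_eq_zero_iff (q : PrimeSpectrum R) (r : R) :
    algebraMap R (ResidueFieldAt q) r = 0 ↔ r ∈ q.asIdeal := by
  have h1 : algebraMap R (ResidueFieldAt q) r =
      IsLocalRing.residue (Localization.AtPrime q.asIdeal)
        (algebraMap R (Localization.AtPrime q.asIdeal) r) := by
    rw [IsScalarTower.algebraMap_apply R (Localization.AtPrime q.asIdeal)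
      (ResidueFieldAt q), IsLocalRing.ResidueField.algebraMap_eq]
  rw [h1]
  exact (Ideal.Quotient.eq_zero_iff_mem).trans
    (IsLocalization.AtPrime.to_map_mem_maximal_iff _ q.asIdeal r)

lemma exists_finset_tmul_span {P : Type*} [AddCommGroup P] [Module R P]
    {A : Type*} [CommRing A] [Algebra R A] (z : A ⊗[R] P) :
    ∃ fs : Finset P, z ∈ Submodule.span A ((fun x : P => (1 : A) ⊗ₜ[R] x) '' ↑fs) := by
  classical
  induction z with
  | zero => exact ⟨∅, Submodule.zero_mem _⟩
  | tmul c x =>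
      refine ⟨{x}, ?_⟩
      have : c ⊗ₜ[R] x = c • ((1 : A) ⊗ₜ[R] x) := by
        rw [TensorProduct.smul_tmul', smul_eq_mul, mul_one]
      rw [this]
      exact Submodule.smul_mem _ _ (Submodule.subset_span (by simp))
  | add z₁ z₂ h₁ h₂ =>
      obtain ⟨f₁, hf₁⟩ := h₁
      obtain ⟨f₂, hf₂⟩ := h₂
      refine ⟨f₁ ∪ f₂, Submodule.add_mem _ ?_ ?_⟩
      · exact Submodule.span_mono (Set.image_mono (by simp)) hf₁
      · exact Submodule.span_mono (Set.image_mono (by simp)) hf₂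

/-- If the fiber of `P` at a prime `q` is a finite `κ(q)`-module, then there is a finite
subset `fs` of `P` detecting membership in `q` for functionals. -/
lemma exists_finset_functional (P : Type*) [AddCommGroup P] [Module R P] (q : PrimeSpectrum R)
    (hfin : Module.Finite (ResidueFieldAt q) (ResidueFieldAt q ⊗[R] P)) :
    ∃ fs : Finset P, ∀ g : P →ₗ[R] R, (∀ x ∈ fs, g x ∈ q.asIdeal) →
      ∀ x : P, g x ∈ q.asIdeal := by
  classical
  set κ := ResidueFieldAt q
  obtain ⟨T, hT⟩ : (⊤ : Submodule κ (κ ⊗[R] P)).FG := hfin.fg_top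
  choose fsf hfsf using fun z : κ ⊗[R] P => exists_finset_tmul_span (A := κ) z
  refine ⟨T.biUnion fsf, fun g hg x => ?_⟩
  have hspan : (⊤ : Submodule κ (κ ⊗[R] P)) ≤
      Submodule.span κ ((fun y : P => (1 : κ) ⊗ₜ[R] y) '' ↑(T.biUnion fsf)) := by
    rw [← hT]
    refine Submodule.span_le.mpr fun t ht => ?_
    exact Submodule.span_mono (Set.image_mono (fun y hy =>
      Finset.mem_coe.mpr (Finset.mem_biUnion.mpr ⟨t, ht, Finset.mem_coe.mp hy⟩))) (hfsf t)
  let G : (κ ⊗[R] P) →ₗ[κ] κ :=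
    (Algebra.TensorProduct.rid R κ κ).toLinearMap ∘ₗ g.baseChange κ
  have hG : ∀ y : P, G ((1 : κ) ⊗ₜ[R] y) = algebraMap R κ (g y) := by
    intro y
    simp only [G, LinearMap.comp_apply, LinearMap.baseChange_tmul,
      AlgEquiv.toLinearMap_apply, Algebra.TensorProduct.rid_tmul]
    rw [Algebra.algebraMap_eq_smul_one]
  have hGzero : ∀ z : κ ⊗[R] P, G z = 0 := by
    intro z
    have hz : z ∈ Submodule.span κ ((fun y : P => (1 : κ) ⊗ₜ[R] y) '' ↑(T.biUnion fsf)) :=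
      hspan Submodule.mem_top
    have hle : Submodule.span κ ((fun y : P => (1 : κ) ⊗ₜ[R] y) '' ↑(T.biUnion fsf)) ≤
        LinearMap.ker G := by
      refine Submodule.span_le.mpr ?_
      rintro _ ⟨y, hy, rfl⟩
      have hy' : g y ∈ q.asIdeal := hg y (Finset.mem_coe.mp hy)
      rw [SetLike.mem_coe, LinearMap.mem_ker, hG]
      rwa [algebraMap_residueFieldAt_eq_zero_iff]
    exact hle hz
  have hx := hGzero ((1 : κ) ⊗ₜ[R] x)
  rw [hG] at hx
  rwa [← algebraMap_residueFieldAt_eq_zero_iff q]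

/-- Over a Noetherian ring, a projective module all of whose fibers at primes are
finite-dimensional is finitely generated. -/
lemma Module.Finite.of_projective_of_finite_fibers (P : Type*) [AddCommGroup P] [Module R P]
    [Module.Projective R P] [IsNoetherianRing R]
    (h : ∀ q : PrimeSpectrum R, Module.Finite (ResidueFieldAt q) (ResidueFieldAt q ⊗[R] P)) :
    Module.Finite R P := by
  classical
  obtain ⟨s, hs⟩ := Module.projective_def.mp ‹Module.Projective R P›
  have hfin : (minimalPrimes R).Finite := minimalPrimes.finite_of_isNoetherianRing R
  have hprime : ∀ p ∈ minimalPrimes R, p.IsPrime := fun p hp =>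
    ((minimalPrimes_eq_minimals (R := R)) ▸ hp).prop
  let Q : {p // p ∈ minimalPrimes R} → PrimeSpectrum R := fun p => ⟨p.1, hprime p.1 p.2⟩
  choose fs hfs using fun p : {p // p ∈ minimalPrimes R} =>
    exists_finset_functional P (Q p) (h (Q p))
  let MP : Finset (Ideal R) := hfin.toFinset
  let J : Finset P := MP.attach.biUnion fun p =>
    (fs ⟨p.1, hfin.mem_toFinset.mp p.2⟩).biUnion fun x => (s x).support
  set S : Submodule R P := Submodule.span R (J : Set P) with hS
  have key : ∀ (x p : P), p ∉ J → (s x) p ∈ nilradical R := by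
    intro x p hp
    rw [nilradical_eq_sInf]
    refine Submodule.mem_sInf.mpr fun I hI => ?_
    haveI : Ideal.IsPrime I := hI
    obtain ⟨p', hp', hple⟩ := Ideal.exists_minimalPrimes_le (bot_le (a := I))
    apply hple
    have hm : p' ∈ MP := hfin.mem_toFinset.mpr hp'
    have hres := hfs ⟨p', hp'⟩ ((Finsupp.lapply p).comp s) ?_ x
    · exact hres
    · intro y hy
      have hzero : (s y) p = 0 := by
        by_contra hne
        exact hp (Finset.mem_biUnion.mpr ⟨⟨p', hm⟩, MP.mem_attach _,
          Finset.mem_biUnion.mpr ⟨y, hy, Finsupp.mem_support_iff.mpr hne⟩⟩)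
      simp [hzero]
  have hsup : ∀ x : P, x ∈ S ⊔ (nilradical R) • (⊤ : Submodule R P) := by
    intro x
    have hx : x = ∑ p ∈ (s x).support, (s x) p • p := by
      conv_lhs => rw [← hs x]
      rw [Finsupp.linearCombination_apply, Finsupp.sum]
      rfl
    rw [hx, ← Finset.sum_filter_add_sum_filter_not (s x).support (· ∈ J)]
    apply Submodule.add_mem
    · refine Submodule.sum_mem _ fun p hp => Submodule.mem_sup_left ?_
      exact Submodule.smul_mem _ _ (Submodule.subset_span (Finset.mem_filter.mp hp).2)
    · refine Submodule.sum_mem _ fun p hp => Submodule.mem_sup_right ?_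
      exact Submodule.smul_mem_smul (key x p (Finset.mem_filter.mp hp).2) Submodule.mem_top
  have htop : (⊤ : Submodule R P) ≤ S ⊔ nilradical R • ⊤ := fun x _ => hsup x
  obtain ⟨k, hk⟩ := IsNoetherianRing.isNilpotent_nilradical R
  have hiter : ∀ j : ℕ, (⊤ : Submodule R P) ≤ S ⊔ (nilradical R ^ j) • ⊤ := by
    intro j
    induction j with
    | zero => simp
    | succ j ih =>
        refine ih.trans ?_
        have h1 : (nilradical R ^ j) • (⊤ : Submodule R P) ≤
            (nilradical R ^ j) • (S ⊔ nilradical R • ⊤) := Submodule.smul_mono le_rfl htop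
        refine (sup_le_sup_left h1 S).trans ?_
        rw [Submodule.smul_sup]
        have h2 : (nilradical R ^ j) • S ≤ S := Submodule.smul_le_right
        have h3 : (nilradical R ^ j) • (nilradical R • (⊤ : Submodule R P)) =
            (nilradical R ^ (j + 1)) • ⊤ := by
          rw [← Submodule.smul_assoc, smul_eq_mul, ← pow_succ]
        rw [h3]
        exact sup_le (le_sup_left) (sup_le (h2.trans le_sup_left) le_sup_right)
  have hfinal : (⊤ : Submodule R P) ≤ S := by
    have hk' := hiter k
    rwa [hk, Ideal.zero_eq_bot, Submodule.bot_smul, sup_bot_eq] at hk'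
  exact ⟨⟨J, by rw [← hS]; exact le_antisymm le_top hfinal⟩⟩

end Aux

section FiberAux

lemma finiteDimensional_tensor_ker_aux
    {R : Type*} [CommRing R] {N F M : Type*} [AddCommGroup N] [Module R N]
    [AddCommGroup F] [Module R F] [Module.Finite R F] [AddCommGroup M] [Module R M]
    (κ : Type*) [Field κ] [Algebra R κ]
    (f : N →ₗ[R] M) (s : F →ₗ[R] M) (σ : M →ₗ[R] N × F)
    (hσ : (f ∘ₗ LinearMap.fst R N F + s ∘ₗ LinearMap.snd R N F) ∘ₗ σ = LinearMap.id)
    [FiniteDimensional κ ↥(LinearMap.ker (f.baseChange κ))] :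
    Module.Finite κ
      (κ ⊗[R] ↥(LinearMap.ker (f ∘ₗ LinearMap.fst R N F + s ∘ₗ LinearMap.snd R N F))) := by
  classical
  set f' : (N × F) →ₗ[R] M := f ∘ₗ LinearMap.fst R N F + s ∘ₗ LinearMap.snd R N F with hf'
  set K : Submodule R (N × F) := LinearMap.ker f' with hKdef
  have hσ' : ∀ m : M, f' (σ m) = m := fun m => LinearMap.ext_iff.mp hσ m
  let π : (N × F) →ₗ[R] (N × F) := LinearMap.id - σ ∘ₗ f'
  have hπK : ∀ z : N × F, π z ∈ K := by
    intro z
    rw [LinearMap.mem_ker]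
    have hz : f' (π z) = f' z - f' (σ (f' z)) := by simp [π, map_sub]
    rw [hz, hσ' (f' z), sub_self]
  let ρ : (N × F) →ₗ[R] ↥K := LinearMap.codRestrict K π hπK
  have hρid : ρ ∘ₗ K.subtype = LinearMap.id := by
    refine LinearMap.ext fun z => Subtype.ext ?_
    have hz : f' (z : N × F) = 0 := z.2
    show π (z : N × F) = (z : N × F)
    simp [π, hz]
  let a := (LinearMap.fst R N F).baseChange κ
  let b := (LinearMap.snd R N F).baseChange κ
  have hid : (LinearMap.inl R N F) ∘ₗ (LinearMap.fst R N F) +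
      (LinearMap.inr R N F) ∘ₗ (LinearMap.snd R N F) = LinearMap.id := by
    ext z <;> simp
  have hab : ∀ z : κ ⊗[R] (N × F),
      (LinearMap.inl R N F).baseChange κ (a z) + (LinearMap.inr R N F).baseChange κ (b z)
        = z := by
    intro z
    have hbc := congrArg (fun g => LinearMap.baseChange κ g) hid
    simp only [LinearMap.baseChange_add, LinearMap.baseChange_comp,
      LinearMap.baseChange_id] at hbc
    exact LinearMap.ext_iff.mp hbc z
  have hf'b : f'.baseChange κ = (f.baseChange κ) ∘ₗ a + (s.baseChange κ) ∘ₗ b := by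
    rw [hf', LinearMap.baseChange_add, LinearMap.baseChange_comp, LinearMap.baseChange_comp]
  set V : Submodule κ (κ ⊗[R] (N × F)) := LinearMap.ker (f'.baseChange κ) with hV
  set W : Submodule κ (κ ⊗[R] (N × F)) := V ⊓ LinearMap.ker b with hW
  have hχmem : ∀ w : ↥W, (a (w : κ ⊗[R] (N × F))) ∈ LinearMap.ker (f.baseChange κ) := by
    intro w
    have hbw : b (w : κ ⊗[R] (N × F)) = 0 := w.2.2
    have hf'w : f'.baseChange κ (w : κ ⊗[R] (N × F)) = 0 := w.2.1
    rw [hf'b] at hf'w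
    simp only [LinearMap.add_apply, LinearMap.comp_apply] at hf'w
    rw [hbw, map_zero, add_zero] at hf'w
    exact hf'w
  let χ : ↥W →ₗ[κ] ↥(LinearMap.ker (f.baseChange κ)) :=
    LinearMap.codRestrict _ (a.domRestrict W) hχmem
  have hχinj : Function.Injective χ := by
    intro w₁ w₂ hw
    have ha : a (w₁ : κ ⊗[R] (N × F)) = a (w₂ : κ ⊗[R] (N × F)) :=
      congrArg Subtype.val hw
    have hb : b (w₁ : κ ⊗[R] (N × F)) = b (w₂ : κ ⊗[R] (N × F)) := by
      rw [w₁.2.2, w₂.2.2]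
    have hww : (w₁ : κ ⊗[R] (N × F)) = (w₂ : κ ⊗[R] (N × F)) := by
      rw [← hab (w₁ : κ ⊗[R] (N × F)), ← hab (w₂ : κ ⊗[R] (N × F)), ha, hb]
    exact Subtype.ext hww
  haveI hWfin : FiniteDimensional κ ↥W := FiniteDimensional.of_injective (V₂ := ↥(LinearMap.ker (f.baseChange κ))) χ hχinj
  haveI hVfin : FiniteDimensional κ ↥V := by
    refine Module.Finite.iff_fg.mpr (Submodule.fg_of_fg_map_of_fg_inf_ker b ?_ ?_)
    · haveI : IsNoetherian κ (κ ⊗[R] F) :=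
        isNoetherian_of_isNoetherianRing_of_finite κ (κ ⊗[R] F)
      exact IsNoetherian.noetherian _
    · exact Module.Finite.iff_fg.mp hWfin
  let ι := (K.subtype).baseChange κ
  have hrange : ∀ z : κ ⊗[R] ↥K, ι z ∈ V := by
    intro z
    have hcomp : f' ∘ₗ K.subtype = 0 := by ext w; exact w.2
    have hz : f'.baseChange κ (ι z) = ((f' ∘ₗ K.subtype).baseChange κ) z := by
      rw [LinearMap.baseChange_comp]; rfl
    rw [hV, LinearMap.mem_ker, hz, hcomp, LinearMap.baseChange_zero, LinearMap.zero_apply]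
  have hιinj : Function.Injective ι := by
    have hbc := congrArg (fun g => LinearMap.baseChange κ g) hρid
    simp only [LinearMap.baseChange_comp, LinearMap.baseChange_id] at hbc
    intro z₁ z₂ hz
    have hz' := congrArg (ρ.baseChange κ) hz
    have h1 := LinearMap.ext_iff.mp hbc z₁
    have h2 := LinearMap.ext_iff.mp hbc z₂
    simp only [LinearMap.comp_apply, LinearMap.id_apply] at h1 h2
    rw [← h1, ← h2]
    exact hz'
  let ι' : (κ ⊗[R] ↥K) →ₗ[κ] ↥V := LinearMap.codRestrict V ι hrange
  have hι'inj : Function.Injective ι' := fun z₁ z₂ hz => hιinj (congrArg Subtype.val hz)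
  exact FiniteDimensional.of_injective (V₂ := ↥V) ι' hι'inj

end FiberAux

/-- Over a Noetherian ring, a linear map between projective modules with finitely
generated cokernel whose fibers at all primes have finite-dimensional kernel and
cokernel is Fredholm: no local constancy of the index need be assumed. -/
theorem isFredholm_of_pointwise_of_noetherian
    {R : Type*} [CommRing R] [IsNoetherianRing R] {N M : Type*}
    [AddCommGroup N] [Module R N] [AddCommGroup M] [Module R M]
    [Module.Projective R N] [Module.Projective R M]
    (f : N →ₗ[R] M)
    (hcoker : Module.Finite R (M ⧸ LinearMap.range f))
    (hfib : ∀ q : PrimeSpectrum R,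
      FiniteDimensional (ResidueFieldAt q)
        (LinearMap.ker (f.baseChange (ResidueFieldAt q))) ∧
      FiniteDimensional (ResidueFieldAt q)
        ((ResidueFieldAt q ⊗[R] M) ⧸ LinearMap.range (f.baseChange (ResidueFieldAt q)))) :
    IsFredholm f := by
  classical
  -- Step 1: augment `f` by a finite free module to get a split surjection `f'`.
  obtain ⟨T, hT⟩ := hcoker.fg_top
  choose yfun hyfun using Submodule.mkQ_surjective (LinearMap.range f)
  set F := ((↑T : Type _) →₀ R) with hF
  let y : (↑T : Type _) → M := fun t => yfun t.1
  set s : F →ₗ[R] M := Finsupp.linearCombination R y with hs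
  set f' : (N × F) →ₗ[R] M := f ∘ₗ LinearMap.fst R N F + s ∘ₗ LinearMap.snd R N F with hf'
  have hf'apply : ∀ z : N × F, f' z = f z.1 + s z.2 := fun z => by rw [hf']; rfl
  have hsurj : Function.Surjective f' := by
    intro m
    have h1 : m ∈ LinearMap.range f ⊔ LinearMap.range s := by
      have h2 : (LinearMap.range f).mkQ m ∈ Submodule.span R (↑T : Set _) := by
        rw [hT]; trivial
      have h3 : Submodule.span R (↑T : Set (M ⧸ LinearMap.range f)) ≤
          (LinearMap.range s).map (LinearMap.range f).mkQ := by
        rw [Submodule.span_le]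
        intro t ht
        refine ⟨yfun t, ⟨Finsupp.single ⟨t, ht⟩ 1, ?_⟩, hyfun t⟩
        rw [hs, Finsupp.linearCombination_single, one_smul]
      obtain ⟨w, hw, hw2⟩ := h3 h2
      have h4 : m - w ∈ LinearMap.range f := by
        rw [← Submodule.ker_mkQ (LinearMap.range f), LinearMap.mem_ker, map_sub, hw2, sub_self]
      have hmw : m = (m - w) + w := by abel
      rw [hmw]
      exact Submodule.add_mem _ (Submodule.mem_sup_left h4) (Submodule.mem_sup_right hw)
    obtain ⟨a, ⟨na, rfl⟩, b, ⟨cb, rfl⟩, rfl⟩ := Submodule.mem_sup.mp h1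
    exact ⟨(na, cb), (hf'apply (na, cb))⟩
  obtain ⟨σ, hσ⟩ := Module.projective_lifting_property f' LinearMap.id hsurj
  have hσ' : ∀ m : M, f' (σ m) = m := fun m => LinearMap.ext_iff.mp hσ m
  set K : Submodule R (N × F) := LinearMap.ker f' with hK
  let π : (N × F) →ₗ[R] (N × F) := LinearMap.id - σ ∘ₗ f'
  have hπK : ∀ z : N × F, π z ∈ K := by
    intro z
    rw [hK, LinearMap.mem_ker]
    have hz : f' (π z) = f' z - f' (σ (f' z)) := by simp [π, map_sub]
    rw [hz, hσ' (f' z), sub_self]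
  let ρ : (N × F) →ₗ[R] ↥K := LinearMap.codRestrict K π hπK
  have hρid : ρ ∘ₗ K.subtype = LinearMap.id := by
    refine LinearMap.ext fun z => Subtype.ext ?_
    have hz : f' (z : N × F) = 0 := z.2
    show π (z : N × F) = (z : N × F)
    simp [π, hz]
  haveI : Module.Projective R ↥K := Module.Projective.of_split K.subtype ρ hρid
  -- Step 2: the kernel is finitely generated.
  have hKfib : ∀ q : PrimeSpectrum R,
      Module.Finite (ResidueFieldAt q) (ResidueFieldAt q ⊗[R] ↥K) := by
    intro q
    haveI := (hfib q).1
    have haux := finiteDimensional_tensor_ker_aux (ResidueFieldAt q) f s σ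
      (by rw [← hf']; exact hσ)
    rw [hK, hf']
    exact haux
  haveI hKfin : Module.Finite R ↥K := Module.Finite.of_projective_of_finite_fibers ↥K hKfib
  -- Step 3: define the parametrix and verify both error terms.
  refine ⟨(LinearMap.fst R N F) ∘ₗ σ, ⟨LinearMap.range s, ?_, ?_⟩,
    ⟨K.map (LinearMap.fst R N F), (Module.Finite.iff_fg.mp hKfin).map _, ?_⟩⟩
  · rw [hs, Finsupp.range_linearCombination]
    exact Submodule.fg_span (Set.finite_range y)
  · rintro _ ⟨m, rfl⟩
    have hm := hσ' m
    rw [hf'apply] at hm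
    simp only [LinearMap.sub_apply, LinearMap.comp_apply, LinearMap.id_apply,
      LinearMap.fst_apply]
    have hval : f (σ m).1 - m = -(s (σ m).2) :=
      eq_neg_of_add_eq_zero_left (by rw [sub_add_eq_add_sub, hm, sub_self])
    rw [hval]
    exact Submodule.neg_mem _ ⟨(σ m).2, rfl⟩
  · rintro _ ⟨n, rfl⟩
    have hfn : f' (n, 0) = f n := by rw [hf'apply]; simp
    simp only [LinearMap.sub_apply, LinearMap.comp_apply, LinearMap.id_apply,
      LinearMap.fst_apply]
    have hval : (σ (f n)).1 - n = -((π (n, 0)).1) := by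
      have hπn : π (n, 0) = (n, 0) - σ (f n) := by
        simp only [π, LinearMap.sub_apply, LinearMap.comp_apply, LinearMap.id_apply, hfn]
      rw [hπn]
      simp
    rw [hval]
    exact Submodule.neg_mem _ ⟨π (n, 0), hπK (n, 0), rfl⟩
end

section
/- Let R be a commutative ring and P a projective R-module, not assumed finitely generated, such that P ⊗_R (R/𝔪) = 0 for every maximal ideal 𝔪 of R. Then P = 0. -/
open TensorProduct

/-- A projective module (not assumed finitely generated) over a commutative ring all of
whose fibers at maximal ideals vanish is zero. -/
theorem projective_eq_zero_of_fibers_eq_zero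
    (R : Type*) [CommRing R] (P : Type*) [AddCommGroup P] [Module R P]
    [Module.Projective R P]
    (h : ∀ m : Ideal R, m.IsMaximal → Subsingleton ((R ⧸ m) ⊗[R] P)) :
    Subsingleton P := by
  obtain ⟨s, hs⟩ := Module.projective_def.mp ‹Module.Projective R P›
  -- every element lies in m • ⊤ for each maximal ideal m
  have hsmul : ∀ m : Ideal R, m.IsMaximal → (⊤ : Submodule R P) ≤ m • ⊤ := by
    intro m hm
    have h1 := h m hm
    have h2 : Subsingleton (P ⧸ (m • (⊤ : Submodule R P))) :=
      (TensorProduct.quotTensorEquivQuotSMul P m).symm.toEquiv.injective.subsingleton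
    rw [Submodule.Quotient.subsingleton_iff] at h2
    exact h2.ge
  -- hence every coordinate of s p lies in the Jacobson radical
  have hcoord : ∀ (p c : P), s p c ∈ Ideal.jacobson (⊥ : Ideal R) := by
    intro p c
    rw [Ideal.jacobson, Ideal.mem_sInf]
    rintro m ⟨-, hm⟩
    have hp : p ∈ (m • ⊤ : Submodule R P) := hsmul m hm trivial
    refine Submodule.smul_induction_on hp ?_ ?_
    · intro r hr n _
      rw [map_smul, Finsupp.smul_apply, smul_eq_mul]
      exact Ideal.mul_mem_right _ _ hr
    · intro a b ha hb
      rw [map_add, Finsupp.add_apply]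
      exact Ideal.add_mem _ ha hb
  rw [subsingleton_iff_forall_eq 0]
  intro x
  -- the ideal of coordinates of x
  set I : Ideal R := Ideal.span ((s x).frange : Set R) with hI
  have hIfg : I.FG := ⟨(s x).frange, rfl⟩
  have hmemI : ∀ c : P, s x c ∈ I := by
    intro c
    by_cases hc : s x c = 0
    · simp [hc]
    · exact Ideal.subset_span (Finsupp.mem_frange.mpr ⟨hc, c, rfl⟩)
  -- key: I ≤ J • I
  have hkey : I ≤ Ideal.jacobson (⊥ : Ideal R) • I := by
    rw [hI, Ideal.span_le]
    intro v hv
    obtain ⟨-, c, rfl⟩ := Finsupp.mem_frange.mp hv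
    -- s x = (s x).sum fun b r => r • s b
    have hx : s x = (s x).sum fun b r => r • s b := by
      conv_lhs => rw [← hs x]
      rw [Finsupp.linearCombination_apply, map_finsuppSum]
      simp
    have : s x c = (s x).sum fun b r => r * s b c := by
      conv_lhs => rw [hx]
      rw [Finsupp.sum_apply]
      simp [Finsupp.sum]
    rw [this]
    refine Submodule.sum_mem _ fun b hb => ?_
    show (s x) b * (s b) c ∈ _
    rw [mul_comm]
    exact Submodule.smul_mem_smul (hcoord b c) (hmemI b)
  have hIbot : I = ⊥ :=
    Submodule.eq_bot_of_le_smul_of_le_jacobson_bot _ I hIfg hkey le_rfl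
  have hsx : s x = 0 := by
    ext c
    have := hmemI c
    rw [hIbot] at this
    simpa using this
  have := hs x
  rw [hsx, map_zero] at this
  exact this.symm
end

section
/- Let K be a field. Call a K-linear functional ℓ : K((t)) → K continuous if there exists an integer n such that ℓ vanishes on t^n K[[t]]. Then the map sending g ∈ K((t)) to the functional f ↦ Res(f·g) is a K-linear bijection from K((t)) onto the space of continuous K-linear functionals on K((t)). -/
/-- A `K`-linear functional on `K((t))` is continuous if it annihilates `t^n K[[t]]`
for some integer `n`, i.e. it kills all Laurent series whose coefficients vanish in
degrees `< n`. -/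
def IsContinuousFunctional (K : Type*) [Field K] (l : LaurentSeries K →ₗ[K] K) : Prop :=
  ∃ n : ℤ, ∀ f : LaurentSeries K, (∀ m : ℤ, m < n → f.coeff m = 0) → l f = 0

/-- If `f` vanishes below `a` and `g` vanishes below `b` with `-1 < a + b`, then
the residue of `f * g` vanishes. -/
lemma res_mul_eq_zero {K : Type*} [Field K] {f g : LaurentSeries K} {a b : ℤ}
    (hf : ∀ m : ℤ, m < a → f.coeff m = 0) (hg : ∀ m : ℤ, m < b → g.coeff m = 0)
    (h : -1 < a + b) : (f * g).coeff (-1) = 0 := by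
  rw [HahnSeries.coeff_mul]
  refine Finset.sum_eq_zero fun ij hij => ?_
  rw [Finset.mem_addAntidiagonal] at hij
  obtain ⟨h1, h2, h3⟩ := hij
  by_cases hij1 : ij.1 < a
  · rw [hf _ hij1, zero_mul]
  by_cases hij2 : ij.2 < b
  · rw [hg _ hij2, mul_zero]
  omega

/-- Residue of `single i c * g`. -/
lemma res_single_mul {K : Type*} [Field K] (g : LaurentSeries K) (i : ℤ) (c : K) :
    (HahnSeries.single i c * g).coeff (-1) = c * g.coeff (-1 - i) := by
  conv_lhs => rw [show (-1 : ℤ) = (-1 - i) + i by ring, HahnSeries.coeff_single_mul_add]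

lemma single_eq_smul_single_one {K : Type*} [Field K] (i : ℤ) (c : K) :
    (HahnSeries.single i c : LaurentSeries K) = c • HahnSeries.single i 1 := by
  ext m
  simp only [HahnSeries.coeff_smul, smul_eq_mul]
  by_cases h : m = i
  · subst h; simp
  · simp [HahnSeries.coeff_single_of_ne h]


lemma smul_support_subset {K : Type*} [Field K] (c : K) (f : LaurentSeries K) :
    (c • f).support ⊆ f.support := by
  intro x hx
  simp only [HahnSeries.mem_support, HahnSeries.coeff_smul, smul_eq_mul] at hx ⊢
  exact fun h => hx (by rw [h, mul_zero])

lemma smul_mul_coeff {K : Type*} [Field K] (c : K) (f g : LaurentSeries K) (a : ℤ) :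
    ((c • f) * g).coeff a = c * (f * g).coeff a := by
  rw [HahnSeries.coeff_mul_left' f.isPWO_support (smul_support_subset c f),
    HahnSeries.coeff_mul, Finset.mul_sum]
  exact Finset.sum_congr rfl fun ij _ => by
    rw [HahnSeries.coeff_smul, smul_eq_mul, mul_assoc]

lemma mul_smul_coeff {K : Type*} [Field K] (c : K) (f g : LaurentSeries K) (a : ℤ) :
    (f * (c • g)).coeff a = c * (f * g).coeff a := by
  rw [HahnSeries.coeff_mul_right' g.isPWO_support (smul_support_subset c g),
    HahnSeries.coeff_mul, Finset.mul_sum]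
  exact Finset.sum_congr rfl fun ij _ => by
    rw [HahnSeries.coeff_smul, smul_eq_mul]; ring

/-- The residue pairing as a bilinear map. -/
noncomputable def resPairing (K : Type*) [Field K] :
    LaurentSeries K →ₗ[K] (LaurentSeries K →ₗ[K] K) where
  toFun g :=
    { toFun := fun f => (f * g).coeff (-1)
      map_add' := fun f1 f2 => by
        show ((f1 + f2) * g).coeff (-1) = (f1 * g).coeff (-1) + (f2 * g).coeff (-1)
        rw [add_mul, HahnSeries.coeff_add]
      map_smul' := fun c f => by
        show ((c • f) * g).coeff (-1) = c • (f * g).coeff (-1)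
        rw [smul_mul_coeff]; rfl }
  map_add' g1 g2 := by
    ext f
    simp [mul_add]
  map_smul' c g := by
    ext f
    show (f * (c • g)).coeff (-1) = c • (f * g).coeff (-1)
    rw [mul_smul_coeff]; rfl

/-- The residue pairing `g ↦ (f ↦ Res(f·g))` is a `K`-linear bijection from `K((t))`
onto the space of continuous `K`-linear functionals on `K((t))`. -/
theorem residue_pairing_linear_equiv_continuous_dual (K : Type*) [Field K] :
    ∃ Φ : LaurentSeries K →ₗ[K] (LaurentSeries K →ₗ[K] K),
      (∀ g f : LaurentSeries K, Φ g f = (f * g).coeff (-1)) ∧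
      Function.Injective Φ ∧
      (∀ g : LaurentSeries K, IsContinuousFunctional K (Φ g)) ∧
      (∀ l : LaurentSeries K →ₗ[K] K, IsContinuousFunctional K l →
        ∃ g : LaurentSeries K, Φ g = l) := by
  refine ⟨resPairing K, fun g f => rfl, ?_, ?_, ?_⟩
  · -- injectivity
    intro g1 g2 h
    ext m
    have := congrFun (congrArg (fun l : LaurentSeries K →ₗ[K] K => (l : LaurentSeries K → K)) h)
      (HahnSeries.single (-1 - m) 1)
    simp only [resPairing, LinearMap.coe_mk, AddHom.coe_mk] at this
    rw [res_single_mul, res_single_mul] at this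
    simpa using this
  · -- continuity
    intro g
    by_cases hg : g = 0
    · exact ⟨0, fun f _ => by simp [hg, resPairing]⟩
    · refine ⟨-g.order, fun f hf => ?_⟩
      show (f * g).coeff (-1) = 0
      exact res_mul_eq_zero (a := -g.order) (b := g.order) hf
        (fun m hm => HahnSeries.coeff_eq_zero_of_lt_order hm) (by omega)
  · -- surjectivity
    rintro l ⟨n, hl⟩
    -- the candidate preimage
    have hsingle_zero : ∀ a : ℤ, n ≤ a → l (HahnSeries.single a 1) = 0 := by
      intro a ha
      refine hl _ fun m hm => ?_
      exact HahnSeries.coeff_single_of_ne (by omega)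
    set gc : ℤ → K := fun j => l (HahnSeries.single (-1 - j) 1) with hgc
    have hgc_zero : ∀ j : ℤ, j < -n → gc j = 0 := fun j hj =>
      hsingle_zero (-1 - j) (by omega)
    have hsupp : Function.support gc ⊆ Set.Ioi (-n - 1) := by
      intro j hj
      simp only [Function.mem_support] at hj
      by_contra hc
      exact hj (hgc_zero j (by simp only [Set.mem_Ioi] at hc; omega))
    have hpwo : (Function.support gc).IsPWO := by
      rw [Set.isPWO_iff_isWF]
      exact BddBelow.wellFoundedOn_lt ⟨-n - 1, fun x hx => le_of_lt (hsupp hx)⟩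
    set g : LaurentSeries K := ⟨gc, hpwo⟩ with hgdef
    have hgcoeff : ∀ j : ℤ, g.coeff j = gc j := fun j => rfl
    refine ⟨g, ?_⟩
    ext f
    show (f * g).coeff (-1) = l f
    -- agreement on singles
    have hkey : ∀ (i : ℤ) (c : K),
        (HahnSeries.single i c * g).coeff (-1) = l (HahnSeries.single i c) := by
      intro i c
      have hgi : gc (-1 - i) = l (HahnSeries.single i 1) := by
        simp only [hgc]
        norm_num
      rw [res_single_mul, hgcoeff, hgi]
      conv_rhs => rw [single_eq_smul_single_one, map_smul, smul_eq_mul]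
    by_cases hf0 : f = 0
    · simp [hf0]
    -- truncation
    set S : Finset ℤ := Finset.Ico f.order n with hS
    set flow : LaurentSeries K := ∑ i ∈ S, HahnSeries.single i (f.coeff i) with hflow
    have hflow_coeff : ∀ m : ℤ, flow.coeff m = if m ∈ S then f.coeff m else 0 := by
      intro m
      rw [hflow, show (∑ i ∈ S, HahnSeries.single i (f.coeff i)).coeff m
        = ∑ i ∈ S, (HahnSeries.single i (f.coeff i)).coeff m from
        map_sum (HahnSeries.coeff.addMonoidHom m) _ S]
      by_cases hm : m ∈ S
      · rw [if_pos hm, Finset.sum_eq_single_of_mem m hm (fun b _ hb =>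
          HahnSeries.coeff_single_of_ne (Ne.symm hb))]
        simp
      · rw [if_neg hm]
        refine Finset.sum_eq_zero fun b hb => ?_
        exact HahnSeries.coeff_single_of_ne (fun h => hm (h ▸ hb))
    have htail : ∀ m : ℤ, m < n → (f - flow).coeff m = 0 := by
      intro m hm
      rw [HahnSeries.coeff_sub, hflow_coeff]
      by_cases hm2 : m ∈ S
      · rw [if_pos hm2]; ring
      · rw [if_neg hm2, sub_zero]
        have : m < f.order := by
          rw [hS, Finset.mem_Ico] at hm2
          omega
        exact HahnSeries.coeff_eq_zero_of_lt_order this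
    have h1 : l f = l flow := by
      have : l (f - flow) = 0 := hl _ htail
      rw [map_sub, sub_eq_zero] at this
      exact this
    have h2 : ((f - flow) * g).coeff (-1) = 0 :=
      res_mul_eq_zero (a := n) (b := -n) htail (fun m hm => hgc_zero m (by omega)) (by omega)
    have h3 : (f * g).coeff (-1) = (flow * g).coeff (-1) := by
      have : ((f - flow) * g).coeff (-1)
          = (f * g).coeff (-1) - (flow * g).coeff (-1) := by
        rw [sub_mul, HahnSeries.coeff_sub]
      rw [this, sub_eq_zero] at h2
      exact h2
    have h4 : (resPairing K g) flow = l flow := by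
      rw [hflow, map_sum, map_sum]
      exact Finset.sum_congr rfl fun i _ => hkey i _
    rw [h3, h1]
    exact h4
end

section
/- Let K be a field of characteristic 0, V a finite-dimensional K((t))-vector space, and D a connection on V such that (V, D) is irreducible. If D : V → V is not bijective, then V is one-dimensional over K((t)) and admits a basis vector e with D(e) = 0; that is, (V, D) is isomorphic to the trivial rank-one connection (K((t)), f ↦ f′). Equivalently, every nontrivial irreducible connection over K((t)) has vanishing de Rham cohomology. -/
noncomputable def lder {K : Type*} [Field K] (f : LaurentSeries K) : LaurentSeries K where
  coeff n := (n + 1 : ℤ) • f.coeff (n + 1)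
  isPWO_support' := by
    have hmono : Monotone (fun m : ℤ => m - 1) := fun a b hab => by simpa using hab
    have h : (Function.support fun n : ℤ => (n + 1 : ℤ) • f.coeff (n + 1)) ⊆
        (fun m : ℤ => m - 1) '' (Function.support f.coeff) := by
      intro n hn
      refine ⟨n + 1, fun h0 => ?_, by ring⟩
      simp [Function.mem_support, h0] at hn
    exact (f.isPWO_support'.image_of_monotoneOn (hmono.monotoneOn _)).mono h

namespace ConnAux

variable {K : Type*} [Field K]

local notation "LS" => LaurentSeries K

lemma lder_coeff (f : LS) (n : ℤ) : (lder f).coeff n = (n + 1 : ℤ) • f.coeff (n + 1) := rfl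

lemma lder_add (f g : LS) : lder (f + g) = lder f + lder g := by
  ext n
  simp [lder_coeff, smul_add]

lemma lder_zero : lder (0 : LS) = 0 := by
  ext n; simp [lder_coeff]

lemma lder_single (k : ℤ) (a : K) :
    lder (HahnSeries.single k a) = HahnSeries.single (k - 1) ((k : ℤ) • a) := by
  ext n
  rw [lder_coeff]
  rcases eq_or_ne n (k - 1) with rfl | hn
  · simp [HahnSeries.coeff_single]
  · have h1 : n + 1 ≠ k := fun h => hn (by omega)
    simp [HahnSeries.coeff_single, hn, h1]

lemma lder_one : lder (1 : LS) = 0 := by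
  have : (1 : LS) = HahnSeries.single 0 1 := rfl
  rw [this, lder_single]
  ext n; simp

/-- finiteness of the support of the convolution integrand -/
lemma conv_support_finite (x y : LS) (k : ℤ) :
    (Function.support fun m => x.coeff (k - m) * y.coeff m).Finite := by
  have hsub : (Function.support fun m => x.coeff (k - m) * y.coeff m) ⊆
      ↑((Finset.antidiagonal x.isPWO_support y.isPWO_support k).image Prod.snd) := by
    intro m hm
    rw [Function.mem_support] at hm
    have hx : x.coeff (k - m) ≠ 0 := left_ne_zero_of_mul hm
    have hy : y.coeff m ≠ 0 := right_ne_zero_of_mul hm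
    simp only [Finset.coe_image, Set.mem_image, Finset.mem_coe,
      Finset.mem_antidiagonal]
    exact ⟨(k - m, m), ⟨hx, hy, by ring⟩, rfl⟩
  exact Set.Finite.subset (Finset.finite_toSet _) hsub

lemma mul_coeff_finsum (x y : LS) (k : ℤ) :
    (x * y).coeff k = ∑ᶠ m, x.coeff (k - m) * y.coeff m := by
  rw [HahnSeries.coeff_mul]
  rw [finsum_eq_finset_sum_of_support_subset _
    (s := (Finset.antidiagonal x.isPWO_support y.isPWO_support k).image Prod.snd)
    (by
      intro m hm
      rw [Function.mem_support] at hm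
      have hx : x.coeff (k - m) ≠ 0 := left_ne_zero_of_mul hm
      have hy : y.coeff m ≠ 0 := right_ne_zero_of_mul hm
      simp only [Finset.coe_image, Set.mem_image, Finset.mem_coe,
        Finset.mem_antidiagonal]
      exact ⟨(k - m, m), ⟨hx, hy, by ring⟩, rfl⟩)]
  rw [Finset.sum_image]
  · refine Finset.sum_congr rfl (fun p hp => ?_)
    rw [Finset.mem_antidiagonal] at hp
    have : k - p.2 = p.1 := by omega
    rw [this]
  · intro p hp q hq hpq
    rw [Finset.mem_coe, Finset.mem_antidiagonal] at hp hq
    ext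
    · omega
    · exact hpq

lemma lder_iterate_coeff (f : LS) (i : ℕ) (b : ℤ) :
    (lder^[i] f).coeff b = (∏ j ∈ Finset.range i, (b + 1 + j : ℤ)) • f.coeff (b + i) := by
  induction i generalizing b with
  | zero => simp
  | succ i ih =>
    rw [Function.iterate_succ_apply', lder_coeff, ih (b + 1)]
    rw [Finset.prod_range_succ']
    rw [smul_smul]
    have hfac : ∀ x ∈ Finset.range i, (b + 1 + ((x : ℕ) + 1 : ℕ) : ℤ) = b + 1 + 1 + (x : ℤ) := by
      intro x _; push_cast; ring
    rw [Finset.prod_congr rfl hfac]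
    congr 1
    · push_cast; ring
    · congr 1; push_cast; ring

lemma conv_support_finite' (x y : LS) (k : ℤ) (F : ℤ → K)
    (h : ∀ m, F m ≠ 0 → x.coeff (k - m) ≠ 0 ∧ y.coeff m ≠ 0) :
    (Function.support F).Finite := by
  refine Set.Finite.subset (conv_support_finite x y k) ?_
  intro m hm
  rw [Function.mem_support] at hm ⊢
  exact mul_ne_zero (h m hm).1 (h m hm).2

lemma lder_mul (f g : LS) : lder (f * g) = lder f * g + f * lder g := by
  ext k
  rw [HahnSeries.coeff_add, lder_coeff, mul_coeff_finsum f g (k + 1),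
    mul_coeff_finsum (lder f) g k, mul_coeff_finsum f (lder g) k]
  -- rewrite the integrands
  have hA : (fun m => (lder f).coeff (k - m) * g.coeff m) =
      fun m => ((k - m + 1 : ℤ) • f.coeff (k - m + 1)) * g.coeff m := by
    funext m; rw [lder_coeff]
  have hB : (fun m => f.coeff (k - m) * (lder g).coeff m) =
      fun m => f.coeff (k - m) * ((m + 1 : ℤ) • g.coeff (m + 1)) := by
    funext m; rw [lder_coeff]
  rw [hA, hB]
  -- reindex the second sum by m ↦ m + 1
  have hre : ∑ᶠ m : ℤ, f.coeff (k - m) * ((m + 1 : ℤ) • g.coeff (m + 1)) =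
      ∑ᶠ m : ℤ, f.coeff (k - m + 1) * ((m : ℤ) • g.coeff m) := by
    have := finsum_comp_equiv (Equiv.addRight (1 : ℤ))
      (f := fun m : ℤ => f.coeff (k - m + 1) * ((m : ℤ) • g.coeff m))
    rw [← this]
    apply finsum_congr
    intro m
    simp only [Equiv.coe_addRight]
    have : k - (m + 1) + 1 = k - m := by ring
    rw [this]
  rw [hre]
  have hfinA : (Function.support fun m : ℤ =>
      ((k - m + 1 : ℤ) • f.coeff (k - m + 1)) * g.coeff m).Finite := by
    refine conv_support_finite' (lder f) g k _ (fun m hm => ?_)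
    constructor
    · rw [lder_coeff]; exact left_ne_zero_of_mul hm
    · exact right_ne_zero_of_mul hm
  have hfinB : (Function.support fun m : ℤ =>
      f.coeff (k - m + 1) * ((m : ℤ) • g.coeff m)).Finite := by
    refine conv_support_finite' f g (k + 1) _ (fun m hm => ?_)
    constructor
    · have : k + 1 - m = k - m + 1 := by ring
      rw [this]; exact left_ne_zero_of_mul hm
    · intro h0
      apply right_ne_zero_of_mul hm
      rw [h0, smul_zero]
  rw [← finsum_add_distrib hfinA hfinB]
  have hfin0 : (Function.support fun m : ℤ =>
      f.coeff (k + 1 - m) * g.coeff m).Finite := conv_support_finite f g (k + 1)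
  rw [smul_finsum' _ hfin0]
  apply finsum_congr
  intro m
  have h1 : k + 1 - m = k - m + 1 := by ring
  rw [h1, smul_mul_assoc, mul_smul_comm, ← add_smul]
  have h2 : k - m + 1 + m = k + 1 := by ring
  rw [h2]

/-- `OB N f` means all coefficients of `f` below `N` vanish. -/
def OB (N : ℤ) (f : LS) : Prop := ∀ k < N, f.coeff k = 0

lemma OB_mono {N M : ℤ} (h : M ≤ N) {f : LS} (hf : OB N f) : OB M f :=
  fun k hk => hf k (lt_of_lt_of_le hk h)

lemma OB_zero (N : ℤ) : OB N (0 : LS) := fun k _ => rfl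

lemma OB_exists (f : LS) : ∃ N, OB N f := by
  rcases eq_or_ne f 0 with rfl | hf
  · exact ⟨0, OB_zero 0⟩
  · exact ⟨f.order, fun k hk => HahnSeries.coeff_eq_zero_of_lt_order hk⟩

lemma OB_add {N : ℤ} {f g : LS} (hf : OB N f) (hg : OB N g) : OB N (f + g) := by
  intro k hk
  rw [HahnSeries.coeff_add, hf k hk, hg k hk, add_zero]

lemma OB_neg {N : ℤ} {f : LS} (hf : OB N f) : OB N (-f) := by
  intro k hk
  rw [HahnSeries.coeff_neg, hf k hk, neg_zero]

lemma OB_sub {N : ℤ} {f g : LS} (hf : OB N f) (hg : OB N g) : OB N (f - g) := by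
  rw [sub_eq_add_neg]; exact OB_add hf (OB_neg hg)

lemma OB_single {N a : ℤ} (h : N ≤ a) (r : K) : OB N (HahnSeries.single a r) := by
  intro k hk
  rw [HahnSeries.coeff_single_of_ne (by omega)]

lemma OB_mul {N M : ℤ} {f g : LS} (hf : OB N f) (hg : OB M g) : OB (N + M) (f * g) := by
  intro k hk
  rw [mul_coeff_finsum]
  apply finsum_eq_zero_of_forall_eq_zero
  intro m
  rcases lt_or_ge m M with hm | hm
  · rw [hg m hm, mul_zero]
  · rw [hf (k - m) (by omega), zero_mul]

lemma OB_lder {N : ℤ} {f : LS} (hf : OB N f) : OB (N - 1) (lder f) := by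
  intro k hk
  rw [lder_coeff, hf (k + 1) (by omega), smul_zero]

lemma OB_lder_iterate {N : ℤ} {f : LS} (hf : OB N f) (i : ℕ) :
    OB (N - i) (lder^[i] f) := by
  induction i with
  | zero => simpa using hf
  | succ i ih =>
    rw [Function.iterate_succ_apply']
    have := OB_lder ih
    refine OB_mono ?_ this
    push_cast; omega

end ConnAux

namespace ConnAux

variable {K : Type*} [Field K]

local notation "LS" => LaurentSeries K

lemma sum_coeff {α : Type*} (s : Finset α) (F : α → LS) (k : ℤ) :
    (∑ i ∈ s, F i).coeff k = ∑ i ∈ s, (F i).coeff k := by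
  classical
  induction s using Finset.induction with
  | empty => simp
  | @insert _ _ h ih =>
    rw [Finset.sum_insert h, Finset.sum_insert h, HahnSeries.coeff_add, ih]

lemma lder_finsetsum {α : Type*} (s : Finset α) (F : α → LS) :
    lder (∑ i ∈ s, F i) = ∑ i ∈ s, lder (F i) := by
  classical
  induction s using Finset.induction with
  | empty => simpa using lder_zero
  | @insert _ _ h ih =>
    rw [Finset.sum_insert h, Finset.sum_insert h, lder_add, ih]

lemma finset_sum_finsum_comm {α : Type*} (s : Finset α) (F : α → ℤ → K)
    (hfin : ∀ i ∈ s, (Function.support (F i)).Finite) :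
    (∑ i ∈ s, ∑ᶠ m, F i m) = ∑ᶠ m, ∑ i ∈ s, F i m := by
  classical
  induction s using Finset.induction with
  | empty => simp
  | @insert a s ha ih =>
    rw [Finset.sum_insert ha, ih (fun i hi => hfin i (Finset.mem_insert_of_mem hi))]
    have h1 : (Function.support (F a)).Finite := hfin a (Finset.mem_insert_self a s)
    have h2 : (Function.support fun m => ∑ i ∈ s, F i m).Finite := by
      refine Set.Finite.subset (Set.Finite.biUnion s.finite_toSet
        (fun i (hi : i ∈ s) => hfin i (Finset.mem_insert_of_mem hi))) ?_
      intro m hm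
      rw [Function.mem_support] at hm
      obtain ⟨i, hi, hne⟩ := Finset.exists_ne_zero_of_sum_ne_zero hm
      exact Set.mem_biUnion hi hne
    rw [← finsum_add_distrib h1 h2]
    apply finsum_congr
    intro m
    rw [Finset.sum_insert ha]

/-- an `n`-th order differential operator with coefficients `c` applied to `h` -/
noncomputable def applyOp (c : ℕ → LS) (n : ℕ) (h : LS) : LS :=
  ∑ i ∈ Finset.range (n + 1), c i * lder^[i] h

/-- the coefficients of the operator `h ↦ lder (applyOp c n h)` -/
noncomputable def derOp (c : ℕ → LS) : ℕ → LS :=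
  fun i => lder (c i) + if i = 0 then 0 else c (i - 1)

lemma lder_applyOp (c : ℕ → LS) (n : ℕ) (h : LS) (hc : c (n + 1) = 0) :
    lder (applyOp c n h) = applyOp (derOp c) (n + 1) h := by
  rw [applyOp, lder_finsetsum]
  have heach : ∀ i, lder (c i * lder^[i] h) =
      lder (c i) * lder^[i] h + c i * lder^[i + 1] h := by
    intro i
    rw [lder_mul, Function.iterate_succ_apply']
  rw [Finset.sum_congr rfl (fun i _ => heach i), Finset.sum_add_distrib]
  rw [applyOp]
  have hsplit : ∀ i, derOp c i * lder^[i] h =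
      lder (c i) * lder^[i] h + (if i = 0 then 0 else c (i - 1)) * lder^[i] h := by
    intro i; rw [derOp, add_mul]
  rw [Finset.sum_congr rfl (fun i _ => hsplit i), Finset.sum_add_distrib]
  congr 1
  · -- first sums: extend by the vanishing top term
    rw [Finset.sum_range_succ (fun i => lder (c i) * lder^[i] h) (n + 1), hc, lder_zero,
      zero_mul, add_zero]
  · -- second sums: peel off the zero bottom term
    rw [Finset.sum_range_succ' (fun i => (if i = 0 then 0 else c (i - 1)) * lder^[i] h) (n + 1)]
    simp [Nat.succ_ne_zero]

end ConnAux

namespace ConnAux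

variable {K : Type*} [Field K]

local notation "LS" => LaurentSeries K

/-- the "matrix coefficient" of the operator in the coefficient basis -/
noncomputable def TT (c : ℕ → LS) (n : ℕ) (k m : ℤ) : K :=
  ∑ i ∈ Finset.range (n + 1),
    (c i).coeff (k - m + i) * ((∏ j ∈ Finset.range i, (m - i + 1 + j : ℤ) : ℤ) : K)

lemma applyOp_coeff (c : ℕ → LS) (n : ℕ) (h : LS) (k : ℤ) :
    (applyOp c n h).coeff k = ∑ᶠ m, TT c n k m * h.coeff m := by
  rw [applyOp, sum_coeff]
  have hterm : ∀ i, (c i * lder^[i] h).coeff k =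
      ∑ᶠ m, (c i).coeff (k - m + i) *
        (((∏ j ∈ Finset.range i, (m - i + 1 + j : ℤ) : ℤ) : K) * h.coeff m) := by
    intro i
    rw [mul_coeff_finsum]
    rw [← finsum_comp_equiv (Equiv.subRight (i : ℤ))]
    apply finsum_congr
    intro m
    simp only [Equiv.subRight_apply]
    rw [lder_iterate_coeff]
    have h1 : k - (m - i) = k - m + i := by ring
    have h2 : m - i + i = m := by ring
    rw [h1, h2]
    rw [zsmul_eq_mul, ← mul_assoc]
  rw [Finset.sum_congr rfl (fun i _ => hterm i)]
  rw [finset_sum_finsum_comm]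
  · apply finsum_congr
    intro m
    rw [TT, Finset.sum_mul]
    apply Finset.sum_congr rfl
    intro i _
    ring
  · intro i _
    refine conv_support_finite' (c i) h (k + i) _ (fun m hm => ?_)
    constructor
    · have : k + i - m = k - m + i := by ring
      rw [this]
      exact left_ne_zero_of_mul hm
    · intro h0
      apply right_ne_zero_of_mul hm
      rw [h0, mul_zero]

lemma TT_vanish {c : ℕ → LS} {n : ℕ} {p : ℤ}
    (hp : ∀ i ≤ n, ∀ x : ℤ, x < i - p → (c i).coeff x = 0)
    {k m : ℤ} (hm : k + p < m) : TT c n k m = 0 := by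
  rw [TT]
  apply Finset.sum_eq_zero
  intro i hi
  rw [Finset.mem_range] at hi
  rw [hp i (by omega) (k - m + i) (by omega), zero_mul]

/-- the indicial values -/
noncomputable def Pval (c : ℕ → LS) (n : ℕ) (p : ℤ) (m : ℤ) : K :=
  ∑ i ∈ Finset.range (n + 1),
    (c i).coeff (i - p) * ((∏ j ∈ Finset.range i, (m - i + 1 + j : ℤ) : ℤ) : K)

lemma TT_diag (c : ℕ → LS) (n : ℕ) (p m : ℤ) : TT c n (m - p) m = Pval c n p m := by
  rw [TT, Pval]
  apply Finset.sum_congr rfl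
  intro i _
  have : m - p - m + i = i - p := by ring
  rw [this]

/-- the indicial polynomial -/
noncomputable def Qpoly (c : ℕ → LS) (n : ℕ) (p : ℤ) : Polynomial K :=
  ∑ i ∈ Finset.range (n + 1),
    Polynomial.C ((c i).coeff (i - p)) *
      ∏ j ∈ Finset.range i, (Polynomial.X - Polynomial.C ((i : K) - 1 - (j : K)))

lemma Qpoly_eval (c : ℕ → LS) (n : ℕ) (p : ℤ) (m : ℤ) :
    (Qpoly c n p).eval (m : K) = Pval c n p m := by
  rw [Qpoly, Pval, Polynomial.eval_finset_sum]
  apply Finset.sum_congr rfl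
  intro i _
  rw [Polynomial.eval_mul, Polynomial.eval_C, Polynomial.eval_prod]
  congr 1
  rw [Int.cast_prod]
  apply Finset.prod_congr rfl
  intro j _
  rw [Polynomial.eval_sub, Polynomial.eval_X, Polynomial.eval_C]
  push_cast
  ring

lemma Qpoly_ne_zero (c : ℕ → LS) (n : ℕ) (p : ℤ)
    (hex : ∃ i ≤ n, (c i).coeff (i - p) ≠ 0) : Qpoly c n p ≠ 0 := by
  classical
  obtain ⟨i₁, hi₁n, hi₁⟩ := hex
  set T : Finset ℕ := (Finset.range (n + 1)).filter (fun i => (c i).coeff (i - p) ≠ 0) with hT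
  have hTne : T.Nonempty := ⟨i₁, by simp [hT, Finset.mem_filter, Finset.mem_range, hi₁, Nat.lt_succ_of_le hi₁n]⟩
  set i₀ := T.max' hTne with hi₀
  have hi₀T : i₀ ∈ T := T.max'_mem hTne
  have hαne : (c i₀).coeff (i₀ - p) ≠ 0 := by
    rw [hT] at hi₀T
    exact (Finset.mem_filter.mp hi₀T).2
  -- the monic factor polynomials
  have hq : ∀ i : ℕ, (∏ j ∈ Finset.range i,
      (Polynomial.X - Polynomial.C ((i : K) - 1 - (j : K)))).Monic ∧
      (∏ j ∈ Finset.range i,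
      (Polynomial.X - Polynomial.C ((i : K) - 1 - (j : K)))).natDegree = i := by
    intro i
    have hmon : (∏ j ∈ Finset.range i,
        (Polynomial.X - Polynomial.C ((i : K) - 1 - (j : K)))).Monic :=
      Polynomial.monic_prod_of_monic _ _ (fun j _ => Polynomial.monic_X_sub_C _)
    constructor
    · exact hmon
    · rw [Polynomial.natDegree_prod_of_monic _ _ (fun j _ => Polynomial.monic_X_sub_C _)]
      simp only [Polynomial.natDegree_X_sub_C, Finset.sum_const, Finset.card_range,
        smul_eq_mul, mul_one]
  intro hzero
  have hcoe : (Qpoly c n p).coeff i₀ = (c i₀).coeff (i₀ - p) := by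
    rw [Qpoly, Polynomial.finset_sum_coeff]
    rw [Finset.sum_eq_single i₀]
    · rw [Polynomial.coeff_C_mul]
      have h1 := (hq i₀).1.coeff_natDegree
      rw [(hq i₀).2] at h1
      rw [h1, mul_one]
    · intro i hi hne
      rcases eq_or_ne ((c i).coeff (i - p)) 0 with h0 | h0
      · rw [h0, map_zero, zero_mul, Polynomial.coeff_zero]
      · have hiT : i ∈ T := by
          rw [hT, Finset.mem_filter]
          exact ⟨hi, h0⟩
        have hile : i ≤ i₀ := Finset.le_max' T i hiT
        have hilt : i < i₀ := lt_of_le_of_ne hile hne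
        apply Polynomial.coeff_eq_zero_of_natDegree_lt
        calc (Polynomial.C ((c i).coeff (i - p)) * _).natDegree
            ≤ _ := Polynomial.natDegree_C_mul_le _ _
          _ = i := (hq i).2
          _ < i₀ := hilt
    · intro hni₀
      exfalso
      apply hni₀
      rw [hT] at hi₀T
      exact (Finset.mem_filter.mp hi₀T).1
  rw [hzero, Polynomial.coeff_zero] at hcoe
  exact hαne hcoe.symm

end ConnAux

namespace ConnAux

variable {K : Type*} [Field K]

local notation "LS" => LaurentSeries K

/-- coefficients of the solution, defined by strong recursion -/
noncomputable def gcoef (c : ℕ → LS) (n : ℕ) (p N₁ : ℤ) (u : LS) : ℕ → K :=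
  WellFounded.fix wellFounded_lt
    (fun d ih =>
      (u.coeff (N₁ + d - p) -
        ∑ d' ∈ Finset.range d, TT c n (N₁ + d - p) (N₁ + d') *
          (if h : d' < d then ih d' h else 0)) / Pval c n p (N₁ + d))

lemma gcoef_eq (c : ℕ → LS) (n : ℕ) (p N₁ : ℤ) (u : LS) (d : ℕ) :
    gcoef c n p N₁ u d = (u.coeff (N₁ + d - p) -
        ∑ d' ∈ Finset.range d, TT c n (N₁ + d - p) (N₁ + d') * gcoef c n p N₁ u d') /
      Pval c n p (N₁ + d) := by
  rw [gcoef, WellFounded.fix_eq]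
  congr 1
  congr 1
  apply Finset.sum_congr rfl
  intro d' hd'
  rw [dif_pos (Finset.mem_range.mp hd')]

/-- the solution Laurent series -/
noncomputable def gsol (c : ℕ → LS) (n : ℕ) (p N₁ : ℤ) (u : LS) : LS where
  coeff m := if N₁ ≤ m then gcoef c n p N₁ u (m - N₁).toNat else 0
  isPWO_support' := by
    have hwf : ((Set.univ : Set ℕ)).IsPWO := (Set.isWF_univ_iff.mpr ⟨wellFounded_lt⟩).isPWO
    have hmono : Monotone (fun d : ℕ => N₁ + (d : ℤ)) := fun a b hab => by
      simp only [add_le_add_iff_left, Int.ofNat_le]; exact hab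
    refine ((hwf.image_of_monotoneOn (hmono.monotoneOn _)).mono ?_)
    intro m hm
    rw [Function.mem_support] at hm
    by_cases h : N₁ ≤ m
    · refine ⟨(m - N₁).toNat, trivial, ?_⟩
      simp only
      omega
    · exact absurd (if_neg h) hm

lemma gsol_coeff (c : ℕ → LS) (n : ℕ) (p N₁ : ℤ) (u : LS) (m : ℤ) :
    (gsol c n p N₁ u).coeff m =
      if N₁ ≤ m then gcoef c n p N₁ u (m - N₁).toNat else 0 := rfl

lemma greedy [CharZero K] (c : ℕ → LS) (n : ℕ) (hex : ∃ i, i ≤ n ∧ c i ≠ 0) :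
    ∃ N₀ : ℤ, ∀ u : LS, OB N₀ u → ∃ h : LS, applyOp c n h = u := by
  classical
  set T : Finset ℕ := (Finset.range (n + 1)).filter (fun i => c i ≠ 0) with hT
  have hTne : T.Nonempty := by
    obtain ⟨i, hin, hi⟩ := hex
    exact ⟨i, Finset.mem_filter.mpr ⟨Finset.mem_range.mpr (Nat.lt_succ_of_le hin), hi⟩⟩
  set p : ℤ := T.sup' hTne (fun i => (i : ℤ) - (c i).order) with hp
  have hpbig : ∀ i ≤ n, ∀ x : ℤ, x < i - p → (c i).coeff x = 0 := by
    intro i hin x hx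
    rcases eq_or_ne (c i) 0 with h0 | h0
    · rw [h0]; rfl
    · have hiT : i ∈ T :=
        Finset.mem_filter.mpr ⟨Finset.mem_range.mpr (Nat.lt_succ_of_le hin), h0⟩
      have hle : (i : ℤ) - (c i).order ≤ p :=
        Finset.le_sup' (f := fun i : ℕ => (i : ℤ) - (c i).order) hiT
      exact HahnSeries.coeff_eq_zero_of_lt_order (by omega)
  have hpex : ∃ i ≤ n, (c i).coeff (i - p) ≠ 0 := by
    obtain ⟨i, hiT, hival⟩ := Finset.exists_mem_eq_sup' hTne (fun i => (i : ℤ) - (c i).order)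
    have h0 : c i ≠ 0 := (Finset.mem_filter.mp hiT).2
    have hin : i ≤ n := by
      have := (Finset.mem_filter.mp hiT).1
      rw [Finset.mem_range] at this
      omega
    refine ⟨i, hin, ?_⟩
    have heq : (i : ℤ) - p = (c i).order := by rw [hp, hival]; ring
    rw [heq]
    exact mt HahnSeries.coeff_order_eq_zero.mp h0
  have hQ : Qpoly c n p ≠ 0 := Qpoly_ne_zero c n p hpex
  have hbad : {m : ℤ | (Qpoly c n p).eval (m : K) = 0}.Finite := by
    refine Set.Finite.subset (Set.Finite.preimage
      (Set.injOn_of_injective Int.cast_injective)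
      (Polynomial.finite_setOf_isRoot hQ)) ?_
    intro m hm
    exact hm
  obtain ⟨B, hB⟩ := hbad.bddAbove
  set N₁ : ℤ := B + 1 with hN₁
  have hPne : ∀ m : ℤ, N₁ ≤ m → Pval c n p m ≠ 0 := by
    intro m hm h0
    have hmem : m ∈ {m : ℤ | (Qpoly c n p).eval (m : K) = 0} := by
      rw [Set.mem_setOf_eq, Qpoly_eval]
      exact h0
    have := hB hmem
    omega
  refine ⟨N₁ - p, fun u hu => ⟨gsol c n p N₁ u, ?_⟩⟩
  ext k
  rw [applyOp_coeff]
  by_cases hk : k < N₁ - p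
  · have hz : ∀ m : ℤ, TT c n k m * (gsol c n p N₁ u).coeff m = 0 := by
      intro m
      by_cases hm : N₁ ≤ m
      · rw [TT_vanish hpbig (by omega), zero_mul]
      · rw [gsol_coeff, if_neg hm, mul_zero]
    rw [finsum_eq_zero_of_forall_eq_zero hz, hu k hk]
  · push_neg at hk
    set d : ℕ := (k + p - N₁).toNat with hd
    have hdk : (d : ℤ) = k + p - N₁ := by omega
    rw [finsum_eq_finset_sum_of_support_subset _
      (s := (Finset.range (d + 1)).image (fun d' : ℕ => N₁ + (d' : ℤ)))
      (by
        intro m hm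
        rw [Function.mem_support] at hm
        have h1 : N₁ ≤ m := by
          by_contra h
          exact hm (by rw [gsol_coeff, if_neg h, mul_zero])
        have h2 : m ≤ k + p := by
          by_contra h
          push_neg at h
          exact hm (by rw [TT_vanish hpbig h, zero_mul])
        simp only [Finset.coe_image, Set.mem_image, Finset.mem_coe, Finset.mem_range]
        exact ⟨(m - N₁).toNat, by omega, by omega⟩)]
    rw [Finset.sum_image (by intro a _ b _ hab; beta_reduce at hab; omega)]
    have hcoeff : ∀ d' : ℕ, (gsol c n p N₁ u).coeff (N₁ + (d' : ℤ)) = gcoef c n p N₁ u d' := by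
      intro d'
      rw [gsol_coeff, if_pos (by omega)]
      congr 1
      omega
    rw [Finset.sum_congr rfl (fun d' _ => by rw [hcoeff d'])]
    rw [Finset.sum_range_succ]
    have hdiag : TT c n k (N₁ + (d : ℤ)) = Pval c n p (N₁ + d) := by
      have hkk : k = (N₁ + (d : ℤ)) - p := by omega
      rw [hkk, TT_diag]
    rw [hdiag, gcoef_eq c n p N₁ u d]
    have harg : N₁ + (d : ℤ) - p = k := by omega
    rw [harg]
    rw [mul_comm (Pval c n p (N₁ + (d : ℤ)))]
    rw [div_mul_cancel₀ _ (hPne (N₁ + d) (by omega))]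
    ring

end ConnAux

namespace ConnAux

variable {K : Type*} [Field K]

local notation "LS" => LaurentSeries K

lemma applyOp_sub (A B : ℕ → LS) (n : ℕ) (h : LS) :
    applyOp (fun i => A i - B i) n h = applyOp A n h - applyOp B n h := by
  rw [applyOp, applyOp, applyOp, ← Finset.sum_sub_distrib]
  apply Finset.sum_congr rfl
  intro i _
  rw [sub_mul]

lemma applyOp_neg (A : ℕ → LS) (n : ℕ) (h : LS) :
    applyOp (fun i => -(A i)) n h = -(applyOp A n h) := by
  rw [applyOp, applyOp, ← Finset.sum_neg_distrib]
  apply Finset.sum_congr rfl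
  intro i _
  ring

lemma applyOp_add (A B : ℕ → LS) (n : ℕ) (h : LS) :
    applyOp (fun i => A i + B i) n h = applyOp A n h + applyOp B n h := by
  rw [applyOp, applyOp, applyOp, ← Finset.sum_add_distrib]
  apply Finset.sum_congr rfl
  intro i _
  rw [add_mul]

lemma applyOp_delta (b : LS) (n : ℕ) (h : LS) :
    applyOp (fun i => if i = 0 then b else 0) n h = b * h := by
  rw [applyOp, Finset.sum_eq_single 0]
  · simp
  · intro i _ hi
    rw [if_neg hi, zero_mul]
  · intro hn
    exact absurd (Finset.mem_range.mpr (Nat.succ_pos n)) hn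

/-- the `g`-free part of the elimination scheme, recorded as operator coefficients -/
noncomputable def opF (b : ℕ → LS) (m : ℕ) : ℕ → ℕ → LS
  | 0 => fun i => if i = 0 then 1 else 0
  | j + 1 => fun i => -(derOp (opF b m j) i) - (if i = 0 then b (m - j) else 0)

/-- the `g`-part of the elimination scheme -/
noncomputable def FG (g : ℕ → LS) (m : ℕ) : ℕ → LS
  | 0 => 0
  | j + 1 => g (m - j) - lder (FG g m j)

/-- the full elimination scheme -/
noncomputable def FF (g b : ℕ → LS) (m : ℕ) (h : LS) : ℕ → LS
  | 0 => h
  | j + 1 => g (m - j) - lder (FF g b m h j) - b (m - j) * h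

lemma opF_high (b : ℕ → LS) (m : ℕ) : ∀ j i, j < i → opF b m j i = 0 := by
  intro j
  induction j with
  | zero => intro i hi; exact if_neg (by omega)
  | succ j ih =>
    intro i hi
    show -(derOp (opF b m j) i) - (if i = 0 then b (m - j) else 0) = 0
    rw [if_neg (by omega), derOp, ih i (by omega), ih (i - 1) (by omega), lder_zero]
    simp

lemma opF_top (b : ℕ → LS) (m : ℕ) : ∀ j, opF b m j j = (-1 : LS) ^ j := by
  intro j
  induction j with
  | zero => simp [opF]
  | succ j ih =>
    show -(derOp (opF b m j) (j + 1)) - (if j + 1 = 0 then b (m - j) else 0) = _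
    rw [if_neg (by omega), derOp, opF_high b m j (j + 1) (by omega), lder_zero]
    simp [ih, pow_succ]

lemma FF_split (g b : ℕ → LS) (m : ℕ) (h : LS) :
    ∀ j, FF g b m h j = applyOp (opF b m j) j h + FG g m j := by
  intro j
  induction j with
  | zero =>
    show h = applyOp (opF b m 0) 0 h + 0
    rw [applyOp]
    simp [opF]
  | succ j ih =>
    show g (m - j) - lder (FF g b m h j) - b (m - j) * h = _
    rw [ih, lder_add, lder_applyOp _ _ _ (opF_high b m j (j + 1) (by omega))]
    show _ = applyOp (fun i => -(derOp (opF b m j) i) - (if i = 0 then b (m - j) else 0))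
        (j + 1) h + (g (m - j) - lder (FG g m j))
    rw [applyOp_sub, applyOp_neg, applyOp_delta]
    ring

lemma FG_OB (g : ℕ → LS) (m : ℕ) {N : ℤ} (hg : ∀ i ≤ m, OB N (g i)) :
    ∀ j : ℕ, OB (N - (j : ℤ)) (FG g m j) := by
  intro j
  induction j with
  | zero => intro k _; rfl
  | succ j ih =>
    show OB _ (g (m - j) - lder (FG g m j))
    apply OB_sub
    · exact OB_mono (by push_cast; omega) (hg (m - j) (by omega))
    · exact OB_mono (by push_cast; omega) (OB_lder ih)

end ConnAux

namespace ConnAux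

variable {K : Type*} [Field K] [CharZero K]
variable {V : Type*} [AddCommGroup V] [Module (LaurentSeries K) V]
  [Module K V] [IsScalarTower K (LaurentSeries K) V]

local notation "LS" => LaurentSeries K

/-- Main lattice lemma: the image of `D` contains all combinations `∑ gᵢ • eᵢ`
with all `gᵢ` of sufficiently large order. -/
lemma lattice_in_range (D : V →ₗ[K] V)
    (hD : ∀ (f : LS) (v : V), D (f • v) = lder f • v + f • D v)
    (m : ℕ) (e : ℕ → V)
    (hstep : ∀ i, e (i + 1) = D (e i))
    (b : ℕ → LS) (hb : D (e m) = ∑ i ∈ Finset.range (m + 1), b i • e i) :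
    ∃ N : ℤ, ∀ g : ℕ → LS, (∀ i ≤ m, OB N (g i)) →
      ∃ v : V, D v = ∑ i ∈ Finset.range (m + 1), g i • e i := by
  classical
  set cM : ℕ → LS := fun i => derOp (opF b m m) i + (if i = 0 then b 0 else 0) with hcM
  have hcMtop : cM (m + 1) ≠ 0 := by
    have h1 : cM (m + 1) = (-1 : LS) ^ m := by
      rw [hcM]
      show derOp (opF b m m) (m + 1) + (if m + 1 = 0 then b 0 else 0) = _
      rw [if_neg (by omega), derOp, opF_high b m m (m + 1) (by omega), lder_zero,
        Nat.add_sub_cancel, opF_top]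
      simp
    rw [h1]
    exact pow_ne_zero _ (neg_ne_zero.mpr one_ne_zero)
  obtain ⟨N₀, hN₀⟩ := greedy cM (m + 1) ⟨m + 1, le_rfl, hcMtop⟩
  refine ⟨N₀ + (m + 1), fun g hg => ?_⟩
  set u : LS := g 0 - lder (FG g m m) with hu
  have huOB : OB N₀ u := by
    apply OB_sub
    · exact OB_mono (by omega) (hg 0 (Nat.zero_le m))
    · have := OB_lder (FG_OB g m hg m)
      exact OB_mono (by push_cast; omega) this
  obtain ⟨h, hh⟩ := hN₀ u huOB
  set f : ℕ → LS := fun i => FF g b m h (m - i) with hf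
  have ftop : f m = h := by rw [hf]; simp [FF]
  have hrec : ∀ i < m, f i = g (i + 1) - lder (f (i + 1)) - b (i + 1) * h := by
    intro i hi
    have h1 : m - i = (m - i - 1) + 1 := by omega
    have h2 : m - (m - i - 1) = i + 1 := by omega
    have h3 : m - i - 1 = m - (i + 1) := by omega
    show FF g b m h (m - i) = _
    rw [h1]
    show g (m - (m - i - 1)) - lder (FF g b m h (m - i - 1)) - b (m - (m - i - 1)) * h = _
    rw [h2, h3]
  have key : g 0 - lder (f 0) - b 0 * h = 0 := by
    have h1 : f 0 = applyOp (opF b m m) m h + FG g m m := by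
      have : f 0 = FF g b m h m := by rw [hf]; simp only [Nat.sub_zero]
      rw [this, FF_split]
    have h2 : applyOp cM (m + 1) h =
        applyOp (derOp (opF b m m)) (m + 1) h + b 0 * h := by
      rw [hcM]
      show applyOp (fun i => derOp (opF b m m) i + (if i = 0 then b 0 else 0)) (m + 1) h = _
      rw [applyOp_add, applyOp_delta]
    have h5 : applyOp (derOp (opF b m m)) (m + 1) h = u - b 0 * h := by
      rw [← hh, h2]; ring
    rw [h1, lder_add, lder_applyOp _ _ _ (opF_high b m m (m + 1) (by omega)), h5, hu]
    ring
  refine ⟨∑ i ∈ Finset.range (m + 1), f i • e i, ?_⟩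
  have hDv : D (∑ i ∈ Finset.range (m + 1), f i • e i) =
      ∑ i ∈ Finset.range (m + 1), (lder (f i) • e i + f i • D (e i)) := by
    rw [map_sum]
    exact Finset.sum_congr rfl (fun i _ => hD (f i) (e i))
  rw [hDv, Finset.sum_add_distrib]
  have h2 : ∑ i ∈ Finset.range (m + 1), f i • D (e i) =
      (∑ i ∈ Finset.range m, f i • e (i + 1)) +
        ∑ i ∈ Finset.range (m + 1), (h * b i) • e i := by
    rw [Finset.sum_range_succ]
    congr 1
    · exact Finset.sum_congr rfl (fun i _ => by rw [← hstep i])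
    · rw [ftop, hb, Finset.smul_sum]
      exact Finset.sum_congr rfl (fun i _ => smul_smul h (b i) (e i))
  have h3 : ∑ i ∈ Finset.range m, f i • e (i + 1) =
      ∑ i ∈ Finset.range (m + 1), (g i - lder (f i) - b i * h) • e i := by
    rw [Finset.sum_range_succ' (fun i => (g i - lder (f i) - b i * h) • e i) m]
    rw [key, zero_smul, add_zero]
    apply Finset.sum_congr rfl
    intro i hi
    rw [hrec i (Finset.mem_range.mp hi)]
  rw [h2, h3, ← add_assoc, ← Finset.sum_add_distrib, ← Finset.sum_add_distrib]
  apply Finset.sum_congr rfl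
  intro i _
  rw [← add_smul, ← add_smul]
  congr 1
  ring

end ConnAux

namespace ConnAux

variable {K : Type*} [Field K]
variable {V : Type*} [AddCommGroup V] [Module (LaurentSeries K) V]
  [Module K V] [IsScalarTower K (LaurentSeries K) V]

local notation "LS" => LaurentSeries K

lemma isPWO_of_bddBelow (S : Set ℤ) (N : ℤ) (h : ∀ x ∈ S, N ≤ x) : S.IsPWO := by
  have hwf : ((Set.univ : Set ℕ)).IsPWO := (Set.isWF_univ_iff.mpr ⟨wellFounded_lt⟩).isPWO
  have hmono : Monotone (fun d : ℕ => N + (d : ℤ)) := fun a b hab => by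
    simp only [add_le_add_iff_left, Int.ofNat_le]; exact hab
  refine ((hwf.image_of_monotoneOn (hmono.monotoneOn _)).mono ?_)
  intro x hx
  refine ⟨(x - N).toNat, trivial, ?_⟩
  have := h x hx
  simp only
  omega

/-- the easy case : `D` has nontrivial kernel -/
lemma easy_case (D : V →ₗ[K] V)
    (hD : ∀ (f : LS) (v : V), D (f • v) = lder f • v + f • D v)
    (hirr : ∀ W : Submodule LS V, (∀ v ∈ W, D v ∈ W) → W = ⊥ ∨ W = ⊤)
    (hker : ∃ v : V, v ≠ 0 ∧ D v = 0) :
    ∃ e : V, e ≠ 0 ∧ D e = 0 ∧ ∀ v : V, ∃ f : LS, v = f • e := by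
  obtain ⟨v, hv0, hDv⟩ := hker
  have hstable : ∀ x ∈ Submodule.span LS {v}, D x ∈ Submodule.span LS {v} := by
    intro x hx
    obtain ⟨f, rfl⟩ := Submodule.mem_span_singleton.mp hx
    rw [hD, hDv, smul_zero, add_zero]
    exact Submodule.smul_mem _ _ (Submodule.mem_span_singleton_self v)
  rcases hirr _ hstable with hbot | htop
  · exfalso
    apply hv0
    have : v ∈ Submodule.span LS {v} := Submodule.mem_span_singleton_self v
    rw [hbot] at this
    simpa using this
  · refine ⟨v, hv0, hDv, fun w => ?_⟩
    have : w ∈ Submodule.span LS {v} := htop ▸ Submodule.mem_top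
    obtain ⟨f, hf⟩ := Submodule.mem_span_singleton.mp this
    exact ⟨f, hf.symm⟩

/-- cyclic vector from irreducibility -/
lemma cyclic [Module.Finite LS V] (D : V →ₗ[K] V)
    (hD : ∀ (f : LS) (v : V), D (f • v) = lder f • v + f • D v)
    (hnontriv : Nontrivial V)
    (hirr : ∀ W : Submodule LS V, (∀ v ∈ W, D v ∈ W) → W = ⊥ ∨ W = ⊤) :
    ∃ (m : ℕ) (e : ℕ → V), (∀ i, e (i + 1) = D (e i)) ∧
      (∀ w : V, ∃ g : ℕ → LS, w = ∑ i ∈ Finset.range (m + 1), g i • e i) := by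
  classical
  obtain ⟨v₀, hv₀⟩ := exists_ne (0 : V)
  haveI : IsNoetherian LS V := IsNoetherian.iff_fg.mpr inferInstance
  set Wf : ℕ → Submodule LS V :=
    fun k => Submodule.span LS (Set.range fun i : Fin k => D^[(i : ℕ)] v₀) with hWf
  have hWmono : Monotone Wf := by
    intro k l hkl
    apply Submodule.span_mono
    rintro x ⟨i, rfl⟩
    exact ⟨⟨(i : ℕ), lt_of_lt_of_le i.2 hkl⟩, rfl⟩
  obtain ⟨n₀, hn₀⟩ := monotone_stabilizes_iff_noetherian.mpr inferInstance ⟨Wf, hWmono⟩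
  set n : ℕ := max n₀ 1 with hn
  have hstab : Wf n = Wf (n + 1) := by
    have h1 := hn₀ n (le_max_left _ _)
    have h2 := hn₀ (n + 1) (le_trans (le_max_left _ _) (Nat.le_succ n))
    exact h1.symm.trans h2
  have hnpos : 1 ≤ n := le_max_right _ _
  have hmem : ∀ i ≤ n, D^[i] v₀ ∈ Wf n := by
    intro i hi
    rcases lt_or_eq_of_le hi with hlt | heq
    · exact Submodule.subset_span ⟨⟨i, hlt⟩, rfl⟩
    · rw [heq, hstab]
      exact Submodule.subset_span ⟨⟨n, Nat.lt_succ_self n⟩, rfl⟩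
  have hDstable : ∀ x ∈ Wf n, D x ∈ Wf n := by
    intro x hx
    refine Submodule.span_induction ?_ ?_ ?_ ?_ hx
    · rintro x ⟨i, rfl⟩
      rw [← Function.iterate_succ_apply' D (i : ℕ) v₀]
      exact hmem _ (Nat.succ_le_of_lt i.2)
    · rw [map_zero]; exact Submodule.zero_mem _
    · intro x y _ _ hx hy
      rw [map_add]; exact Submodule.add_mem _ hx hy
    · intro a x hxmem hx
      rw [hD]
      exact Submodule.add_mem _ (Submodule.smul_mem _ _ hxmem) (Submodule.smul_mem _ _ hx)
  have hWtop : Wf n = ⊤ := by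
    rcases hirr _ hDstable with hbot | htop
    · exfalso
      apply hv₀
      have : v₀ ∈ Wf n := by
        have := Submodule.subset_span (R := LS)
          (s := Set.range fun i : Fin n => D^[(i : ℕ)] v₀) ⟨⟨0, hnpos⟩, rfl⟩
        simpa using this
      rw [hbot] at this
      simpa using this
    · exact htop
  obtain ⟨m, hm⟩ : ∃ m, n = m + 1 := ⟨n - 1, by omega⟩
  refine ⟨m, fun i => D^[i] v₀, fun i => Function.iterate_succ_apply' D i v₀, fun w => ?_⟩
  have hw : w ∈ Wf n := hWtop ▸ Submodule.mem_top
  rw [hWf] at hw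
  obtain ⟨c, hc⟩ := (Submodule.mem_span_range_iff_exists_fun (LaurentSeries K)).mp hw
  refine ⟨fun i => if h : i < n then c ⟨i, h⟩ else 0, ?_⟩
  rw [← hc, ← hm]
  rw [← Fin.sum_univ_eq_sum_range (fun i => (if h : i < n then c ⟨i, h⟩ else 0) • D^[i] v₀) n]
  apply Finset.sum_congr rfl
  intro i _
  rw [dif_pos i.2]

end ConnAux

namespace ConnAux

variable {K : Type*} [Field K]
variable {V : Type*} [AddCommGroup V] [Module (LaurentSeries K) V]
  [Module K V] [IsScalarTower K (LaurentSeries K) V]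

local notation "LS" => LaurentSeries K

lemma single_one_mul_coeff (a : ℤ) (f : LS) (j : ℤ) :
    ((HahnSeries.single a (1 : K) : LS) * f).coeff j = f.coeff (j - a) := by
  have h := HahnSeries.coeff_single_mul_add (r := (1 : K)) (x := f) (a := j - a) (b := a)
  rw [sub_add_cancel] at h
  rw [h, one_mul]

lemma single_smul_eq (j : ℤ) (r : K) :
    (HahnSeries.single j r : LS) = r • (HahnSeries.single j 1 : LS) := by
  ext k
  rw [HahnSeries.coeff_smul]
  rcases eq_or_ne k j with rfl | hk
  · simp
  · simp [HahnSeries.coeff_single_of_ne hk]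

lemma phi_expand (φ : V →ₗ[K] K) (v : V) (k₀ : ℤ)
    (hk₀ : ∀ fs : LS, OB k₀ fs → φ (fs • v) = 0) (f : LS) :
    φ (f • v) = ∑ᶠ j : ℤ, f.coeff j * φ ((HahnSeries.single j 1 : LS) • v) := by
  classical
  rcases eq_or_ne f 0 with rfl | hf
  · rw [zero_smul, map_zero]
    rw [finsum_eq_zero_of_forall_eq_zero (fun j => by rw [HahnSeries.coeff_zero, zero_mul])]
  · have hfin : (f.support ∩ Set.Iio k₀).Finite := by
      refine (Set.finite_Icc f.order (k₀ - 1)).subset ?_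
      rintro x ⟨hx1, hx2⟩
      exact ⟨HahnSeries.order_le_of_coeff_ne_zero hx1, by
        simp only [Set.mem_Iio] at hx2; omega⟩
    set SF : Finset ℤ := hfin.toFinset with hSF
    set trunc : LS := ∑ j ∈ SF, HahnSeries.single j (f.coeff j) with htrunc
    have htr_coeff : ∀ k, trunc.coeff k = if k ∈ SF then f.coeff k else 0 := by
      intro k
      rw [htrunc, sum_coeff]
      rw [Finset.sum_congr rfl (fun j _ => HahnSeries.coeff_single (a := j) (b := k)
        (r := f.coeff j))]
      rw [Finset.sum_congr rfl (fun j _ => by convert rfl using 2 <;> exact Subsingleton.elim _ _ :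
        ∀ j ∈ SF, (@ite K (k = j) (Classical.propDecidable (k = j)) (f.coeff j) 0) =
          (if k = j then f.coeff j else 0))]
      exact Finset.sum_ite_eq SF k (fun j => f.coeff j)
    have htail : OB k₀ (f - trunc) := by
      intro k hk
      rw [HahnSeries.coeff_sub, htr_coeff k]
      by_cases hmem : k ∈ SF
      · rw [if_pos hmem, sub_self]
      · rw [if_neg hmem, sub_zero]
        by_contra hne
        exact hmem (hfin.mem_toFinset.mpr ⟨hne, hk⟩)
    have hdecomp : φ (f • v) = φ (trunc • v) := by
      have h1 : f • v = (f - trunc) • v + trunc • v := by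
        rw [← add_smul, sub_add_cancel]
      rw [h1, map_add, hk₀ _ htail, zero_add]
    rw [hdecomp, htrunc, Finset.sum_smul, map_sum]
    have hterm : ∀ j, φ ((HahnSeries.single j (f.coeff j) : LS) • v) =
        f.coeff j * φ ((HahnSeries.single j 1 : LS) • v) := by
      intro j
      rw [single_smul_eq j (f.coeff j), smul_assoc, map_smul, smul_eq_mul]
    rw [Finset.sum_congr rfl (fun j _ => hterm j)]
    rw [finsum_eq_finset_sum_of_support_subset]
    intro j hj
    rw [Function.mem_support] at hj
    have h1 : f.coeff j ≠ 0 := left_ne_zero_of_mul hj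
    have h2 : φ ((HahnSeries.single j 1 : LS) • v) ≠ 0 := right_ne_zero_of_mul hj
    have h3 : j < k₀ := by
      by_contra hge
      push_neg at hge
      exact h2 (hk₀ _ (OB_single hge 1))
    exact Finset.mem_coe.mpr (hfin.mem_toFinset.mpr ⟨h1, h3⟩)

end ConnAux

/-- An irreducible connection over `K((t))` whose underlying operator `D : V → V` is
not bijective is isomorphic to the trivial rank-one connection: `V` has a basis
vector `e` with `D e = 0`.  Equivalently, a nontrivial irreducible connection has
vanishing de Rham cohomology. -/
theorem irreducible_connection_not_bijective_is_trivial
    (K : Type*) [Field K] [CharZero K]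
    (V : Type*) [AddCommGroup V] [Module (LaurentSeries K) V]
    [Module.Finite (LaurentSeries K) V]
    [Module K V] [IsScalarTower K (LaurentSeries K) V]
    (D : V →ₗ[K] V)
    (hD : ∀ (f : LaurentSeries K) (v : V), D (f • v) = lder f • v + f • D v)
    (hnontriv : Nontrivial V)
    (hirr : ∀ W : Submodule (LaurentSeries K) V,
      (∀ v ∈ W, D v ∈ W) → W = ⊥ ∨ W = ⊤)
    (hnotbij : ¬ Function.Bijective D) :
    ∃ e : V, e ≠ 0 ∧ D e = 0 ∧ ∀ v : V, ∃ f : LaurentSeries K, v = f • e := by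
  classical
  rcases Classical.em (∃ v : V, v ≠ 0 ∧ D v = 0) with hker | hker
  · exact ConnAux.easy_case D hD hirr hker
  · -- `D` is injective, hence not surjective
    have hnotsurj : ¬ Function.Surjective D := by
      intro hsurj
      apply hnotbij
      refine ⟨fun a b hab => ?_, hsurj⟩
      by_contra hne
      exact hker ⟨a - b, sub_ne_zero.mpr hne, by rw [map_sub, hab, sub_self]⟩
    rw [Function.Surjective] at hnotsurj
    push_neg at hnotsurj
    obtain ⟨w₀, hw₀⟩ := hnotsurj
    -- the cyclic structure and lattice contained in the range of D
    obtain ⟨m, e, hstep, hspan⟩ := ConnAux.cyclic D hD hnontriv hirr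
    obtain ⟨b, hb⟩ := hspan (D (e m))
    obtain ⟨N, hN⟩ := ConnAux.lattice_in_range D hD m e hstep b hb
    -- a functional vanishing on the range of D
    set R : Submodule K V := LinearMap.range D with hR
    have hw₀R : w₀ ∉ R := by
      rintro ⟨v, hv⟩
      exact hw₀ v hv
    have hq₀ : R.mkQ w₀ ≠ 0 := by
      rw [Submodule.mkQ_apply, ne_eq, Submodule.Quotient.mk_eq_zero]
      exact hw₀R
    obtain ⟨φ0, hφ0⟩ : ∃ φ0 : Module.Dual K (V ⧸ R), φ0 (R.mkQ w₀) ≠ 0 := by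
      by_contra hcon
      push_neg at hcon
      exact hq₀ ((Module.forall_dual_apply_eq_zero_iff K _).mp hcon)
    set φ : V →ₗ[K] K := φ0.comp R.mkQ with hφ
    have hφD : ∀ v : V, φ (D v) = 0 := by
      intro v
      have : R.mkQ (D v) = 0 := by
        rw [Submodule.mkQ_apply, Submodule.Quotient.mk_eq_zero]
        exact ⟨v, rfl⟩
      rw [hφ, LinearMap.comp_apply, this, map_zero]
    have hφw₀ : φ w₀ ≠ 0 := hφ0
    -- the killing lemma
    have hkill : ∀ g : ℕ → LaurentSeries K, (∀ i ≤ m, ConnAux.OB N (g i)) →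
        φ (∑ i ∈ Finset.range (m + 1), g i • e i) = 0 := by
      intro g hg
      obtain ⟨v, hv⟩ := hN g hg
      rw [← hv]
      exact hφD v
    -- vanishing of φ on deep multiples of any vector
    have vanish : ∀ w : V, ∃ k₀ : ℤ, ∀ fs : LaurentSeries K,
        ConnAux.OB k₀ fs → φ (fs • w) = 0 := by
      intro w
      obtain ⟨g0, hg0⟩ := hspan w
      choose NN hNN using fun i => ConnAux.OB_exists (g0 i)
      have hne : ((Finset.range (m + 1)).image NN).Nonempty :=
        Finset.Nonempty.image ⟨0, Finset.mem_range.mpr (Nat.succ_pos m)⟩ NN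
      set cmin := ((Finset.range (m + 1)).image NN).min' hne with hcmin
      refine ⟨N - cmin, fun fs hfs => ?_⟩
      rw [hg0, Finset.smul_sum]
      rw [Finset.sum_congr rfl (fun i _ => smul_smul fs (g0 i) (e i))]
      apply hkill
      intro i hi
      have h1 : cmin ≤ NN i := Finset.min'_le _ _
        (Finset.mem_image_of_mem NN (Finset.mem_range.mpr (by omega)))
      exact ConnAux.OB_mono (by omega) (ConnAux.OB_mul hfs (hNN i))
    choose k0f hk0f using vanish
    -- the horizontal functional λ
    set lamF : V → LaurentSeries K := fun w =>
      ⟨fun mm => φ ((HahnSeries.single (-mm - 1) 1 : LaurentSeries K) • w), by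
        apply ConnAux.isPWO_of_bddBelow _ (-(k0f w))
        intro x hx
        rw [Function.mem_support] at hx
        by_contra hlt
        push_neg at hlt
        exact hx (hk0f w _ (ConnAux.OB_single (by omega) 1))⟩ with hlamF
    have lam_coeff : ∀ (w : V) (mm : ℤ), (lamF w).coeff mm =
        φ ((HahnSeries.single (-mm - 1) 1 : LaurentSeries K) • w) := fun _ _ => rfl
    have lam_add : ∀ w₁ w₂ : V, lamF (w₁ + w₂) = lamF w₁ + lamF w₂ := by
      intro w₁ w₂
      ext mm
      rw [HahnSeries.coeff_add, lam_coeff, lam_coeff, lam_coeff, smul_add, map_add]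
    have lam_smul : ∀ (fs : LaurentSeries K) (w : V), lamF (fs • w) = fs * lamF w := by
      intro fs w
      ext mm
      rw [lam_coeff, smul_smul, ConnAux.phi_expand φ w (k0f w) (hk0f w),
        ConnAux.mul_coeff_finsum fs (lamF w) mm]
      have hre : ∀ j : ℤ,
          ((HahnSeries.single (-mm - 1) 1 : LaurentSeries K) * fs).coeff j *
            φ ((HahnSeries.single j 1 : LaurentSeries K) • w) =
          fs.coeff (mm - (-j - 1)) * (lamF w).coeff (-j - 1) := by
        intro j
        rw [ConnAux.single_one_mul_coeff, lam_coeff]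
        have e1 : j - (-mm - 1) = mm - (-j - 1) := by ring
        have e2 : -(-j - 1) - 1 = j := by ring
        rw [e1, e2]
      rw [finsum_congr hre]
      have h2 := finsum_comp_equiv
        (⟨fun j : ℤ => -j - 1, fun j : ℤ => -j - 1, fun j => by ring, fun j => by ring⟩ : ℤ ≃ ℤ)
        (f := fun j : ℤ => fs.coeff (mm - j) * (lamF w).coeff j)
      simp only [Equiv.coe_fn_mk] at h2
      exact h2
    have lam_D : ∀ w : V, lamF (D w) = lder (lamF w) := by
      intro w
      ext mm
      rw [lam_coeff, ConnAux.lder_coeff, lam_coeff]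
      have h0 : φ (D ((HahnSeries.single (-mm - 1) 1 : LaurentSeries K) • w)) = 0 := hφD _
      rw [hD, ConnAux.lder_single, map_add] at h0
      have hsm : (HahnSeries.single (-mm - 1 - 1) ((-mm - 1 : ℤ) • (1 : K)) :
          LaurentSeries K) = (((-mm - 1 : ℤ) : K)) •
            (HahnSeries.single (-mm - 1 - 1) (1 : K) : LaurentSeries K) := by
        rw [ConnAux.single_smul_eq]
        congr 1
        rw [zsmul_eq_mul, mul_one]
      rw [hsm, smul_assoc, map_smul, smul_eq_mul] at h0
      have hidx : (-mm - 1 - 1 : ℤ) = -(mm + 1) - 1 := by ring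
      rw [hidx] at h0
      rw [zsmul_eq_mul]
      push_cast at h0 ⊢
      linear_combination h0
    -- bundle as a LaurentSeries-linear map
    set lamL : V →ₗ[LaurentSeries K] LaurentSeries K :=
      { toFun := lamF
        map_add' := lam_add
        map_smul' := fun fs w => by simpa [smul_eq_mul] using lam_smul fs w } with hlamL
    have hlam_w₀ : lamF w₀ ≠ 0 := by
      intro hz
      apply hφw₀
      have h1 : (lamF w₀).coeff (-1) = φ w₀ := by
        rw [lam_coeff]
        have : (-(-1 : ℤ) - 1) = 0 := by ring
        rw [this, HahnSeries.single_zero_one, one_smul]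
      rw [hz, HahnSeries.coeff_zero] at h1
      exact h1.symm
    -- kernel is D-stable, hence trivial
    have hinj : Function.Injective lamL := by
      rw [← LinearMap.ker_eq_bot]
      rcases hirr (LinearMap.ker lamL) (fun v hv => by
        rw [LinearMap.mem_ker] at hv ⊢
        show lamF (D v) = 0
        rw [lam_D]
        have : lamF v = 0 := hv
        rw [this, ConnAux.lder_zero]) with hbot | htop
      · exact hbot
      · exfalso
        apply hlam_w₀
        have : w₀ ∈ LinearMap.ker lamL := htop ▸ Submodule.mem_top
        exact this
    have hsurj : Function.Surjective lamL := by
      rw [← LinearMap.range_eq_top]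
      rcases Ideal.eq_bot_or_top (LinearMap.range lamL) with hbot | htop
      · exfalso
        apply hlam_w₀
        have : lamL w₀ ∈ LinearMap.range lamL := LinearMap.mem_range_self _ _
        rw [hbot] at this
        exact (Submodule.mem_bot _).mp this
      · exact htop
    set eqv := LinearEquiv.ofBijective lamL ⟨hinj, hsurj⟩ with heqv
    refine ⟨eqv.symm 1, ?_, ?_, ?_⟩
    · intro hz
      have h1 : lamL (eqv.symm 1) = 1 := eqv.apply_symm_apply 1
      rw [hz, map_zero] at h1
      exact one_ne_zero h1.symm
    · apply hinj
      have h1 : lamL (eqv.symm 1) = 1 := eqv.apply_symm_apply 1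
      show lamF (D (eqv.symm 1)) = lamL 0
      rw [lam_D, map_zero]
      have h2 : lamF (eqv.symm 1) = 1 := h1
      rw [h2, ConnAux.lder_one]
    · intro v
      refine ⟨lamF v, ?_⟩
      apply hinj
      have h1 : lamL (eqv.symm 1) = 1 := eqv.apply_symm_apply 1
      show lamL v = lamL (lamF v • eqv.symm 1)
      rw [map_smul, h1, smul_eq_mul, mul_one]
      rfl
end

section
/- Let K be a field of characteristic 0, n ≥ 1, and a₀, …, a_{n−1} ∈ K((t)). Let θ : K((t)) → K((t)) be the K-linear map f ↦ t·f′, and define the K-linear operator A := (−1)^{n−1}·θ^n + Σ_{i=0}^{n−1} (−1)^i·θ^i ∘ m_{a_i}, where m_{a_i} denotes multiplication by a_i. Set r := max(0, max{−ord(a_i) : 0 ≤ i ≤ n−1, a_i ≠ 0}), where ord denotes the t-adic order of a nonzero Laurent series (the smallest exponent with nonzero coefficient), with r := 0 if all a_i vanish. Then A(t^j·K[[t]]) ⊆ t^{j−r}·K[[t]] for every integer j, and for all but finitely many integers j the coefficient of t^{j−r} in A(t^j) is nonzero. -/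
open scoped Classical

lemma lder_coeff {K : Type*} [Field K] (f : LaurentSeries K) (m : ℤ) :
    (lder f).coeff m = (m + 1 : ℤ) • f.coeff (m + 1) := rfl

lemma theta_coeff {K : Type*} [Field K] (θ : LaurentSeries K → LaurentSeries K)
    (hθ : ∀ x : LaurentSeries K,
      θ x = (HahnSeries.single (1 : ℤ) (1 : K) : LaurentSeries K) * lder x)
    (x : LaurentSeries K) (m : ℤ) :
    (θ x).coeff m = (m : K) * x.coeff m := by
  rw [hθ]
  have h1 : m = (m - 1) + 1 := by ring
  rw [h1, HahnSeries.coeff_single_mul_add, lder_coeff]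
  have h2 : m - 1 + 1 = m := by ring
  rw [h2, zsmul_eq_mul]
  ring_nf

lemma theta_iter_coeff {K : Type*} [Field K] (θ : LaurentSeries K → LaurentSeries K)
    (hθ : ∀ x : LaurentSeries K,
      θ x = (HahnSeries.single (1 : ℤ) (1 : K) : LaurentSeries K) * lder x)
    (k : ℕ) (x : LaurentSeries K) (m : ℤ) :
    (θ^[k] x).coeff m = (m : K) ^ k * x.coeff m := by
  induction k generalizing x with
  | zero => simp
  | succ k ih =>
    rw [Function.iterate_succ_apply, ih, theta_coeff θ hθ]
    ring

lemma zsmul_coeff {K : Type*} [Field K] (z : ℤ) (x : LaurentSeries K) (m : ℤ) :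
    (z • x).coeff m = z • x.coeff m :=
  map_zsmul (HahnSeries.coeff.addMonoidHom m) z x

lemma mul_coeff_vanish {K : Type*} [Field K] (x y : LaurentSeries K) (j m : ℤ)
    (hy : ∀ p : ℤ, p < j → y.coeff p = 0) (hm : m < x.order + j) :
    (x * y).coeff m = 0 := by
  rw [HahnSeries.coeff_mul]
  apply Finset.sum_eq_zero
  rintro ⟨p, q⟩ hpq
  rw [Finset.mem_addAntidiagonal] at hpq
  obtain ⟨hp, hq, hsum⟩ := hpq
  exfalso
  have h1 : x.order ≤ p := HahnSeries.order_le_of_coeff_ne_zero hp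
  have h2 : q < j := by omega
  exact hq (hy q h2)

/-- The differential operator `A = (−1)^{n−1} θ^n + Σ_i (−1)^i θ^i ∘ m_{a_i}` attached
to a cyclic vector, where `θ = t·d/dt`, shifts the lattice filtration `t^j K[[t]]` by
the irregularity `r = max(0, max_i −ord(a_i))`, and the induced maps on the associated
graded pieces `t^j K / t^{j−r} K` are nonzero for all but finitely many `j`. -/
theorem cyclic_operator_shifts_filtration_by_irregularity
    (K : Type*) [Field K] [CharZero K] (n : ℕ) (hn : 1 ≤ n)
    (a : Fin n → LaurentSeries K)
    (θ : LaurentSeries K → LaurentSeries K)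
    (hθ : ∀ x : LaurentSeries K,
      θ x = (HahnSeries.single (1 : ℤ) (1 : K) : LaurentSeries K) * lder x)
    (A : LaurentSeries K → LaurentSeries K)
    (hA : ∀ h : LaurentSeries K,
      A h = ((-1 : ℤ) ^ (n - 1)) • θ^[n] h +
        ∑ i : Fin n, ((-1 : ℤ) ^ (i : ℕ)) • θ^[(i : ℕ)] (a i * h))
    (r : ℤ)
    (hr : r = Finset.fold max 0 (fun i => -(a i).order)
      (Finset.univ.filter fun i => a i ≠ 0)) :
    (∀ (j : ℤ) (h : LaurentSeries K), (∀ m : ℤ, m < j → h.coeff m = 0) →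
      ∀ m : ℤ, m < j - r → (A h).coeff m = 0) ∧
    {j : ℤ | (A (HahnSeries.single j (1 : K))).coeff (j - r) = 0}.Finite := by
  have hfold := (Finset.fold_max_le r).mp (le_of_eq hr.symm)
  have hr0 : 0 ≤ r := hfold.1
  have hbound : ∀ i : Fin n, -(a i).order ≤ r := by
    intro i
    rcases eq_or_ne (a i) 0 with h0 | h0
    · simp [h0, hr0]
    · exact hfold.2 i (Finset.mem_filter.mpr ⟨Finset.mem_univ i, h0⟩)
  constructor
  · intro j h hh m hm
    rw [hA]
    rw [HahnSeries.coeff_add]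
    have hsum : (∑ i : Fin n, ((-1 : ℤ) ^ (i : ℕ)) • θ^[(i : ℕ)] (a i * h)).coeff m =
        ∑ i : Fin n, (((-1 : ℤ) ^ (i : ℕ)) • θ^[(i : ℕ)] (a i * h)).coeff m :=
      map_sum (HahnSeries.coeff.addMonoidHom m) _ _
    rw [hsum]
    have h1 : (θ^[n] h).coeff m = 0 := by
      rw [theta_iter_coeff θ hθ, hh m (by omega), mul_zero]
    have h2 : ∀ i : Fin n, (θ^[(i : ℕ)] (a i * h)).coeff m = 0 := by
      intro i
      rw [theta_iter_coeff θ hθ]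
      rw [mul_coeff_vanish (a i) h j m hh (by have := hbound i; omega), mul_zero]
    rw [zsmul_coeff, h1, smul_zero, zero_add]
    apply Finset.sum_eq_zero
    intro i _
    rw [zsmul_coeff, h2 i, smul_zero]
  · set c : Fin n → K := fun i => (a i).coeff (-r) with hc
    set P : Polynomial K :=
      (if r = 0 then Polynomial.C ((-1 : K) ^ (n - 1)) * Polynomial.X ^ n else 0) +
        ∑ i : Fin n, Polynomial.C ((-1 : K) ^ (i : ℕ) * c i) * Polynomial.X ^ (i : ℕ) with hP
    have key : ∀ j : ℤ, (A (HahnSeries.single j (1 : K))).coeff (j - r) =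
        P.eval ((j - r : ℤ) : K) := by
      intro j
      rw [hA, HahnSeries.coeff_add]
      have hsum : (∑ i : Fin n,
            ((-1 : ℤ) ^ (i : ℕ)) • θ^[(i : ℕ)] (a i * HahnSeries.single j (1 : K))).coeff (j - r) =
          ∑ i : Fin n,
            (((-1 : ℤ) ^ (i : ℕ)) • θ^[(i : ℕ)] (a i * HahnSeries.single j (1 : K))).coeff (j - r) :=
        map_sum (HahnSeries.coeff.addMonoidHom (j - r)) _ _
      rw [hsum]
      have hmul : ∀ i : Fin n,
          (a i * HahnSeries.single j (1 : K)).coeff (j - r) = c i := by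
        intro i
        have : j - r = (-r) + j := by ring
        rw [this, HahnSeries.coeff_mul_single_add, mul_one]
      have hterm : ∀ i : Fin n,
          (((-1 : ℤ) ^ (i : ℕ)) • θ^[(i : ℕ)] (a i * HahnSeries.single j (1 : K))).coeff (j - r) =
            (-1 : K) ^ (i : ℕ) * (((j - r : ℤ) : K) ^ (i : ℕ) * c i) := by
        intro i
        rw [zsmul_coeff, theta_iter_coeff θ hθ, hmul i, zsmul_eq_mul]
        push_cast
        ring
      have hP1 : (((-1 : ℤ) ^ (n - 1)) • θ^[n] (HahnSeries.single j (1 : K))).coeff (j - r) =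
          (-1 : K) ^ (n - 1) * (((j - r : ℤ) : K) ^ n *
            (if r = 0 then (1 : K) else 0)) := by
        rw [zsmul_coeff, theta_iter_coeff θ hθ, HahnSeries.coeff_single, zsmul_eq_mul]
        have : (j - r = j) ↔ (r = 0) := by omega
        simp only [this]
        push_cast
        ring
      rw [hP1]
      simp only [hterm]
      rw [hP]
      rw [Polynomial.eval_add, Polynomial.eval_finset_sum]
      simp only [Polynomial.eval_mul, Polynomial.eval_C, Polynomial.eval_pow, Polynomial.eval_X]
      split_ifs with h0
      · simp only [Polynomial.eval_mul, Polynomial.eval_C, Polynomial.eval_pow, Polynomial.eval_X]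
        exact congrArg₂ (· + ·) (by ring) (Finset.sum_congr rfl fun _ _ => by ring)
      · simp only [Polynomial.eval_zero]
        exact congrArg₂ (· + ·) (by ring) (Finset.sum_congr rfl fun _ _ => by ring)
    have hPne : P ≠ 0 := by
      rcases eq_or_ne r 0 with h0 | h0
      · intro hzero
        have hcoeff : P.coeff n = (-1 : K) ^ (n - 1) := by
          rw [hP]
          simp only [h0, if_true, Polynomial.coeff_add, Polynomial.finset_sum_coeff,
            Polynomial.coeff_C_mul, Polynomial.coeff_X_pow, if_pos rfl, mul_one]
          rw [Finset.sum_eq_zero, add_zero]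
          intro i _
          rw [if_neg (by omega : ¬ n = (i : ℕ)), mul_zero]
        rw [hzero, Polynomial.coeff_zero] at hcoeff
        exact (pow_ne_zero _ (neg_ne_zero.mpr (one_ne_zero (α := K)))) hcoeff.symm
      · -- r > 0; find index achieving the max
        have hr1 : 1 ≤ r := by omega
        have hnot : ¬ (Finset.fold max 0 (fun i => -(a i).order)
            (Finset.univ.filter fun i => a i ≠ 0) ≤ r - 1) := by
          rw [← hr]; omega
        rw [Finset.fold_max_le] at hnot
        push_neg at hnot
        obtain ⟨i₀, hi₀mem, hi₀⟩ := hnot (by omega)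
        · have hane : a i₀ ≠ 0 := (Finset.mem_filter.mp hi₀mem).2
          have hle : -(a i₀).order ≤ r := hbound i₀
          have hord : (a i₀).order = -r := by omega
          have hcne : c i₀ ≠ 0 := by
            rw [hc]
            simpa [hord] using (HahnSeries.coeff_order_eq_zero.not.mpr hane)
          intro hzero
          have hcoeff : P.coeff (i₀ : ℕ) = (-1 : K) ^ (i₀ : ℕ) * c i₀ := by
            rw [hP]
            simp only [if_neg h0, zero_add, Polynomial.finset_sum_coeff,
              Polynomial.coeff_C_mul, Polynomial.coeff_X_pow]
            rw [Finset.sum_eq_single i₀]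
            · rw [if_pos rfl, mul_one]
            · intro k _ hk
              rw [if_neg (fun hh => hk (Fin.ext hh.symm)), mul_zero]
            · intro hcon; exact absurd (Finset.mem_univ i₀) hcon
          rw [hzero, Polynomial.coeff_zero] at hcoeff
          exact hcne (by
            have := hcoeff.symm
            rcases mul_eq_zero.mp this with h | h
            · exact absurd h (pow_ne_zero _ (neg_ne_zero.mpr one_ne_zero))
            · exact h)
    have hinj : Function.Injective (fun j : ℤ => ((j - r : ℤ) : K)) := by
      intro x y hxy
      have := Int.cast_injective (α := K) hxy
      omega
    have hsubset : {j : ℤ | (A (HahnSeries.single j (1 : K))).coeff (j - r) = 0} ⊆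
        (fun j : ℤ => ((j - r : ℤ) : K)) ⁻¹' {x | P.IsRoot x} := by
      intro j hj
      simp only [Set.mem_setOf_eq] at hj
      simp only [Set.mem_preimage, Set.mem_setOf_eq, Polynomial.IsRoot]
      rw [← key j]; exact hj
    exact Set.Finite.subset
      ((Polynomial.finite_setOf_isRoot hPne).preimage hinj.injOn) hsubset
end
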